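/- arXiv:1110.2117 — 2 statements merged into one kernel-verified Lean document; each statement's English description precedes it below -/
import Mathlib

section
/- Let F be a generic step skew product over a transitive subshift of finite type and let μ_1, μ_2 be two ergodic stationary measures of the associated random walk Π(F). Then either the intervals I_{μ_1,k} and I_{μ_2,k} are disjoint for every symbol k, or they coincide for every symbol k; and in the disjoint case they appear in the same vertical order on every interval I_k (i.e., if I_{μ_1,k} lies below I_{μ_2,k} for some k, then I_{μ_1,m} lies below I_{μ_2,m} for all m). -/
open MeasureTheory Set Filter Topology
open scoped ENNReal

namespace PaperSSP

/-- Data of a step skew product over a transitive subshift of finite type, together with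
the transition probabilities and stationary distribution defining a Markov measure. -/
structure Sys (N : ℕ) where
  /-- transition (0-1) matrix of the subshift -/
  A : Fin N → Fin N → Bool
  /-- fiber maps -/
  f : Fin N → ℝ → ℝ
  /-- stochastic transition matrix -/
  P : Fin N → Fin N → ℝ
  /-- stationary distribution -/
  p : Fin N → ℝ
  transitive : ∃ n : ℕ, 0 < n ∧ ∀ i j : Fin N,
    0 < (((Matrix.of fun i j => if A i j then (1 : ℕ) else 0)) ^ n) i j
  f_meas : ∀ k, Measurable (f k)
  f_contDiff : ∀ k, ContDiffOn ℝ 1 (f k) (Icc 0 1)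
  f_mono : ∀ k, StrictMonoOn (f k) (Icc 0 1)
  f_deriv_pos : ∀ k, ∀ x ∈ Icc (0:ℝ) 1, 0 < derivWithin (f k) (Icc 0 1) x
  f_into : ∀ k, MapsTo (f k) (Icc 0 1) (Ioo 0 1)
  P_nonneg : ∀ i j, 0 ≤ P i j
  P_row : ∀ i, ∑ j, P i j = 1
  P_pos_iff : ∀ i j, (0 < P i j ↔ A i j = true)
  p_nonneg : ∀ i, 0 ≤ p i
  p_sum : ∑ i, p i = 1
  p_stationary : ∀ j, ∑ i, P i j * p i = p j

variable {N : ℕ}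

/-- The two-sided shift space `Σ`. -/
abbrev Sig (S : Sys N) : Type := {ω : ℤ → Fin N // ∀ n : ℤ, S.A (ω n) (ω (n + 1)) = true}

/-- The left shift `σ` on `Σ`. -/
def shift (S : Sys N) (ω : Sig S) : Sig S := ⟨fun n => ω.1 (n + 1), fun n => ω.2 (n + 1)⟩

/-- The step skew product `F (ω, x) = (σ ω, f_{ω₀} x)`. -/
def Fmap (S : Sys N) : Sig S × ℝ → Sig S × ℝ := fun q => (shift S q.1, S.f (q.1.1 0) q.2)

/-- `ν` is the Markov measure on `Σ` given by the cylinder formula. -/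
def IsMarkovMeasure (S : Sys N) (ν : Measure (Sig S)) : Prop :=
  IsProbabilityMeasure ν ∧
  ∀ k m : ℤ, k ≤ m → ∀ w : ℤ → Fin N,
    ν {ω : Sig S | ∀ i : ℤ, k ≤ i → i ≤ m → ω.1 i = w i} =
      ENNReal.ofReal (S.p (w k) * ∏ i ∈ Finset.Icc k (m - 1), S.P (w i) (w (i + 1)))

/-- Admissibility of a pair of symbols. -/
def Adm (S : Sys N) (i j : Fin N) : Prop := S.A i j = true

/-- The composition `f_{w_n} ∘ ⋯ ∘ f_{w_1}` along a word `l = [w_1, …, w_n]`. -/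
def wordMap (S : Sys N) (l : List (Fin N)) : ℝ → ℝ := fun x => l.foldl (fun y k => S.f k y) x

/-- A simple return: an admissible word `w_1 … w_n` of pairwise distinct symbols with
`(w_n, w_1)` admissible; its map is `wordMap` of the word. -/
def IsSimpleReturn (S : Sys N) (l : List (Fin N)) : Prop :=
  l.Nodup ∧ l.Chain' (Adm S) ∧ ∃ a b, l.head? = some a ∧ l.getLast? = some b ∧ Adm S b a

/-- A simple transition: an admissible word `w_1 … w_{n+1}` (n ≥ 1) of pairwise distinct
symbols; its map is `transMap`, going from `I_{w_1}` to `I_{w_{n+1}}`. -/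
def IsSimpleTransition (S : Sys N) (t : List (Fin N)) : Prop :=
  2 ≤ t.length ∧ t.Nodup ∧ t.Chain' (Adm S)

/-- The map `f_{w_n} ∘ ⋯ ∘ f_{w_1}` of the transition word `t = w_1 … w_{n+1}`. -/
def transMap (S : Sys N) (t : List (Fin N)) : ℝ → ℝ := wordMap S t.dropLast

/-- Attracting (hyperbolic) fixed point. -/
def IsAttrFP (g : ℝ → ℝ) (x : ℝ) : Prop := g x = x ∧ deriv g x < 1

/-- Repelling (hyperbolic) fixed point. -/
def IsRepFP (g : ℝ → ℝ) (x : ℝ) : Prop := g x = x ∧ 1 < deriv g x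

/-- The genericity conditions (1)–(3). -/
def IsGeneric (S : Sys N) : Prop :=
  (∀ l, IsSimpleReturn S l → ∀ x ∈ Icc (0:ℝ) 1, wordMap S l x = x →
      deriv (wordMap S l) x ≠ 1) ∧
  (∀ l t l', IsSimpleReturn S l → IsSimpleTransition S t → IsSimpleReturn S l' →
      t.head? = l.head? → t.getLast? = l'.head? → ∀ x ∈ Icc (0:ℝ) 1,
      (IsAttrFP (wordMap S l) x → ¬ IsRepFP (wordMap S l') (transMap S t x)) ∧
      (IsRepFP (wordMap S l) x → ¬ IsAttrFP (wordMap S l') (transMap S t x))) ∧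
  ¬ ∃ a : Fin N → ℝ, (∀ k, a k ∈ Icc (0:ℝ) 1) ∧ ∀ i j, Adm S i j → S.f i (a i) = a j

/-- The strip between two graphs. -/
def Strip (S : Sys N) (φ₁ φ₂ : Sig S → ℝ) : Set (Sig S × ℝ) :=
  {q | φ₁ q.1 ≤ q.2 ∧ q.2 ≤ φ₂ q.1}

/-- A strip `S_{φ₁, φ₂}` with `φ₁ < φ₂` continuous, `I`-valued. -/
def IsStrip (S : Sys N) (T : Set (Sig S × ℝ)) : Prop :=
  ∃ φ₁ φ₂ : Sig S → ℝ, Continuous φ₁ ∧ Continuous φ₂ ∧ (∀ ω, φ₁ ω ∈ Icc (0:ℝ) 1) ∧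
    (∀ ω, φ₂ ω ∈ Icc (0:ℝ) 1) ∧ (∀ ω, φ₁ ω < φ₂ ω) ∧ T = Strip S φ₁ φ₂

/-- Trapping strip: `F(S) ⊆ int S`. -/
def IsTrappingStrip (S : Sys N) (T : Set (Sig S × ℝ)) : Prop :=
  IsStrip S T ∧ Fmap S '' T ⊆ interior T

/-- Inverse trapping strip: `F⁻¹(S) ⊆ int S`. -/
def IsInvTrappingStrip (S : Sys N) (T : Set (Sig S × ℝ)) : Prop :=
  IsStrip S T ∧ Fmap S ⁻¹' T ⊆ interior T

/-- The maximal attractor `⋂ₙ Fⁿ(T)` of a (trapping) strip. -/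
def Amax (S : Sys N) (T : Set (Sig S × ℝ)) : Set (Sig S × ℝ) := ⋂ n : ℕ, (Fmap S)^[n] '' T

/-- The repeller `⋂ₙ F⁻ⁿ(T)` of an (inverse trapping) strip. -/
def Repel (S : Sys N) (T : Set (Sig S × ℝ)) : Set (Sig S × ℝ) := ⋂ n : ℕ, (Fmap S)^[n] ⁻¹' T

/-- The metric `d(ω, ω') = 2^{-min{|n| : ωₙ ≠ ω'ₙ}}` on `Σ`. -/
noncomputable def dS (S : Sys N) (ω ω' : Sig S) : ℝ :=
  letI := Classical.propDecidable (ω = ω')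
  if ω = ω' then 0
  else (2:ℝ) ^ (-((sInf {k : ℕ | ∃ n : ℤ, n.natAbs = k ∧ ω.1 n ≠ ω'.1 n} : ℕ) : ℤ))

/-- The fiber `B_ω` of a subset of `Σ × ℝ`. -/
def fiber {S : Sys N} (B : Set (Sig S × ℝ)) (ω : Sig S) : Set ℝ := {x | (ω, x) ∈ B}

/-- A bony graph w.r.t. `ν`: closed, every fiber a closed interval, a.e. fiber a point. -/
def IsBony (S : Sys N) (ν : Measure (Sig S)) (B : Set (Sig S × ℝ)) : Prop :=
  IsClosed B ∧ (∀ ω, ∃ a b : ℝ, a ≤ b ∧ fiber B ω = Icc a b) ∧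
  ∀ᵐ ω ∂ν, ∃ x, fiber B ω = {x}

/-- A continuous-bony graph: a bony graph with upper-semicontinuous fibers. -/
def IsCBG (S : Sys N) (ν : Measure (Sig S)) (B : Set (Sig S × ℝ)) : Prop :=
  IsBony S ν B ∧ ∀ ω : Sig S, ∀ ε > (0:ℝ), ∃ δ > (0:ℝ), ∀ ω', dS S ω ω' < δ →
    ∀ x ∈ fiber B ω', ∃ y ∈ fiber B ω, |x - y| < ε

/-- The standard measure: product of `ν` with Lebesgue measure on the fiber. -/
noncomputable def stdMeas (S : Sys N) (ν : Measure (Sig S)) : Measure (Sig S × ℝ) :=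
  ν.prod (volume.restrict (Icc 0 1))

/-- A stationary measure of the random walk `Π(F)`, as a family `μ_k` of measures
on the fibers with total mass 1, supported on `I`, with `∑ᵢ π_{ij} (f_i)_* μ_i = μ_j`. -/
def IsStationary (S : Sys N) (μ : Fin N → Measure ℝ) : Prop :=
  (∀ k, IsFiniteMeasure (μ k)) ∧ (∑ k, μ k univ) = 1 ∧ (∀ k, μ k (Icc (0:ℝ) 1)ᶜ = 0) ∧
  ∀ j, μ j = ∑ i, ENNReal.ofReal (S.P i j) • (μ i).map (S.f i)

/-- Ergodic stationary measure: an extreme point of the convex set of stationary measures. -/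
def IsErgodicStationary (S : Sys N) (μ : Fin N → Measure ℝ) : Prop :=
  IsStationary S μ ∧ ∀ μ₁ μ₂ : Fin N → Measure ℝ, IsStationary S μ₁ → IsStationary S μ₂ →
    ∀ t : ℝ≥0∞, 0 < t → t < 1 → (∀ k, μ k = t • μ₁ k + (1 - t) • μ₂ k) → μ₁ = μ₂

/-- The (topological) support of a measure on `ℝ`. -/
def msupport (m : Measure ℝ) : Set ℝ := {x | ∀ ε > (0:ℝ), 0 < m (Ioo (x - ε) (x + ε))}

/-- `A_{μ,k} = min supp μ_k`. -/
noncomputable def Alow (m : Measure ℝ) : ℝ := sInf (msupport m)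

/-- `B_{μ,k} = max supp μ_k`. -/
noncomputable def Bhigh (m : Measure ℝ) : ℝ := sSup (msupport m)

/-- A domain: a disjoint union of nonempty subintervals `D_k ⊆ I_k`. -/
def IsDomain {N : ℕ} (D : Fin N → Set ℝ) : Prop :=
  ∀ k, (D k).Nonempty ∧ (D k).OrdConnected ∧ D k ⊆ Icc 0 1

/-- A trapping domain: `f_k(D_k) ⊆ int D_m` for all admissible `(k, m)`. -/
def IsTrappingDomain (S : Sys N) (D : Fin N → Set ℝ) : Prop :=
  IsDomain D ∧ ∀ k m, Adm S k m → S.f k '' D k ⊆ interior (D m)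

/-- A nonstrictly trapping domain: `f_k(D_k) ⊆ D_m` for all admissible `(k, m)`. -/
def IsNSTrappingDomain (S : Sys N) (D : Fin N → Set ℝ) : Prop :=
  IsDomain D ∧ ∀ k m, Adm S k m → S.f k '' D k ⊆ D m

/-- The one-sided shift space `Σ₊`. -/
abbrev Sig1 (S : Sys N) : Type := {ω : ℕ → Fin N // ∀ n : ℕ, S.A (ω n) (ω (n + 1)) = true}

/-- The one-sided left shift. -/
def shift1 (S : Sys N) (ω : Sig1 S) : Sig1 S := ⟨fun n => ω.1 (n + 1), fun n => ω.2 (n + 1)⟩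

/-- The one-sided skew product `F₊`. -/
def Fmap1 (S : Sys N) : Sig1 S × ℝ → Sig1 S × ℝ := fun q => (shift1 S q.1, S.f (q.1.1 0) q.2)

/-- The "forgetting the past" projection `π : Σ → Σ₊`. -/
def forget (S : Sys N) (ω : Sig S) : Sig1 S :=
  ⟨fun n => ω.1 n, fun n => by push_cast; exact ω.2 (n : ℤ)⟩

/-- The basin of a measure `m`: points whose time averages converge to `m`. -/
def Basin (S : Sys N) (m : Measure (Sig S × ℝ)) : Set (Sig S × ℝ) :=
  {q | ∀ g : C(Sig S × ℝ, ℝ),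
    Tendsto (fun n : ℕ => (∑ i ∈ Finset.range n, g ((Fmap S)^[i] q)) / n) atTop
      (𝓝 (∫ q', g q' ∂m))}


section Aux

variable {N : ℕ}

/-- The 0-1 matrix over ℕ of a system. -/
def natM (S : Sys N) : Matrix (Fin N) (Fin N) ℕ :=
  Matrix.of fun i j => if S.A i j then (1 : ℕ) else 0

lemma path_prop (S : Sys N) (Q : Fin N → Prop)
    (hstep : ∀ i j, Adm S i j → Q i → Q j) :
    ∀ n (i j : Fin N), 0 < ((natM S) ^ n) i j → Q i → Q j := by
  intro n
  induction n with
  | zero =>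
    intro i j h hQ
    rw [pow_zero] at h
    rw [Matrix.one_apply] at h
    by_cases hij : i = j
    · rwa [← hij]
    · simp [hij] at h
  | succ n ih =>
    intro i j h hQ
    rw [pow_succ, Matrix.mul_apply] at h
    have : ∃ k, 0 < ((natM S) ^ n) i k * (natM S) k j := by
      by_contra hc
      push_neg at hc
      simp only [Nat.le_zero] at hc
      rw [Finset.sum_eq_zero (fun k _ => hc k)] at h
      exact lt_irrefl 0 h
    obtain ⟨k, hk⟩ := this
    have h1 : 0 < ((natM S) ^ n) i k := Nat.pos_of_ne_zero (by
      intro h0; rw [h0, zero_mul] at hk; exact lt_irrefl 0 hk)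
    have h2 : 0 < (natM S) k j := Nat.pos_of_ne_zero (by
      intro h0; rw [h0, mul_zero] at hk; exact lt_irrefl 0 hk)
    have hadm : Adm S k j := by
      unfold natM at h2
      by_cases hA : S.A k j = true
      · exact hA
      · simp [Matrix.of_apply, hA] at h2
    exact hstep k j hadm (ih i k h1 hQ)

end Aux
/-! ### Support lemmas for a single measure -/

lemma compl_msupport_null (m : Measure ℝ) : m (msupport m)ᶜ = 0 := by
  have hcover : (msupport m)ᶜ ⊆
      ⋃ (p : ℚ × ℚ) (_ : m (Ioo (p.1 : ℝ) (p.2 : ℝ)) = 0), Ioo (p.1 : ℝ) (p.2 : ℝ) := by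
    intro x hx
    simp only [msupport, mem_compl_iff, mem_setOf_eq, not_forall] at hx
    obtain ⟨ε, hε, hm⟩ := hx
    have hm0 : m (Ioo (x - ε) (x + ε)) = 0 := by
      by_contra h; exact hm (pos_iff_ne_zero.mpr h)
    obtain ⟨q1, hq1, hq1'⟩ := exists_rat_btwn (show x - ε < x by linarith)
    obtain ⟨q2, hq2, hq2'⟩ := exists_rat_btwn (show x < x + ε by linarith)
    have hnull : m (Ioo ((q1:ℝ)) ((q2:ℝ))) = 0 :=
      measure_mono_null (fun y hy => mem_Ioo.mpr ⟨lt_trans hq1 (mem_Ioo.mp hy).1, lt_trans (mem_Ioo.mp hy).2 hq2'⟩) hm0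
    exact mem_iUnion.mpr ⟨(q1, q2), mem_iUnion.mpr ⟨hnull, hq1', hq2⟩⟩
  refine measure_mono_null hcover ?_
  refine measure_iUnion_null fun p => measure_iUnion_null fun h => h

lemma msupport_subset_Icc {m : Measure ℝ} (hI : m (Icc (0:ℝ) 1)ᶜ = 0) :
    msupport m ⊆ Icc 0 1 := by
  intro x hx
  by_contra hxI
  rw [mem_Icc, not_and_or] at hxI
  rcases hxI with h0 | h1
  · push_neg at h0
    have hε : (0:ℝ) < -x := by linarith
    have := hx (-x) hε
    have hsub : Ioo (x - -x) (x + -x) ⊆ (Icc (0:ℝ) 1)ᶜ := by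
      intro y hy
      simp only [mem_compl_iff, mem_Icc, not_and_or, not_le]
      left; have := hy.2; linarith
    rw [measure_mono_null hsub hI] at this
    exact lt_irrefl 0 this
  · push_neg at h1
    have hε : (0:ℝ) < x - 1 := by linarith
    have := hx (x - 1) hε
    have hsub : Ioo (x - (x-1)) (x + (x-1)) ⊆ (Icc (0:ℝ) 1)ᶜ := by
      intro y hy
      simp only [mem_compl_iff, mem_Icc, not_and_or, not_le]
      right; have := hy.1; linarith
    rw [measure_mono_null hsub hI] at this
    exact lt_irrefl 0 this

lemma isClosed_msupport (m : Measure ℝ) : IsClosed (msupport m) := by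
  rw [← isOpen_compl_iff]
  rw [Metric.isOpen_iff]
  intro x hx
  simp only [msupport, mem_compl_iff, mem_setOf_eq, not_forall] at hx
  obtain ⟨ε, hε, hm⟩ := hx
  have hm0 : m (Ioo (x - ε) (x + ε)) = 0 := by
    by_contra h; exact hm (pos_iff_ne_zero.mpr h)
  refine ⟨ε/2, by linarith, ?_⟩
  intro y hy
  rw [Metric.mem_ball, Real.dist_eq] at hy
  have habs : |y - x| < ε/2 := hy
  simp only [msupport, mem_compl_iff, mem_setOf_eq, not_forall]
  refine ⟨ε/2, by linarith, ?_⟩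
  have hsub : Ioo (y - ε/2) (y + ε/2) ⊆ Ioo (x - ε) (x + ε) := by
    intro z hz
    cases' abs_lt.mp habs with h1 h2
    exact ⟨by cases hz; linarith, by cases hz; linarith⟩
  rw [measure_mono_null hsub hm0]
  exact fun h => lt_irrefl 0 h

lemma msupport_nonempty {m : Measure ℝ} (hm : m ≠ 0) : (msupport m).Nonempty := by
  by_contra h
  rw [not_nonempty_iff_eq_empty] at h
  have huniv : m univ = 0 := by
    have := compl_msupport_null m
    rwa [h, compl_empty] at this
  rw [Measure.measure_univ_eq_zero] at huniv
  exact hm huniv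
lemma Alow_mem {m : Measure ℝ} (hm : m ≠ 0) (hI : m (Icc (0:ℝ) 1)ᶜ = 0) :
    Alow m ∈ msupport m :=
  (isClosed_msupport m).csInf_mem (msupport_nonempty hm)
    (BddBelow.mono (msupport_subset_Icc hI) (bddBelow_Icc))

lemma Bhigh_mem {m : Measure ℝ} (hm : m ≠ 0) (hI : m (Icc (0:ℝ) 1)ᶜ = 0) :
    Bhigh m ∈ msupport m :=
  (isClosed_msupport m).csSup_mem (msupport_nonempty hm)
    (BddAbove.mono (msupport_subset_Icc hI) (bddAbove_Icc))

lemma Alow_le {m : Measure ℝ} (hI : m (Icc (0:ℝ) 1)ᶜ = 0) {x : ℝ}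
    (hx : x ∈ msupport m) : Alow m ≤ x :=
  csInf_le (BddBelow.mono (msupport_subset_Icc hI) (bddBelow_Icc)) hx

lemma le_Bhigh {m : Measure ℝ} (hI : m (Icc (0:ℝ) 1)ᶜ = 0) {x : ℝ}
    (hx : x ∈ msupport m) : x ≤ Bhigh m :=
  le_csSup (BddAbove.mono (msupport_subset_Icc hI) (bddAbove_Icc)) hx

lemma Alow_le_Bhigh {m : Measure ℝ} (hm : m ≠ 0) (hI : m (Icc (0:ℝ) 1)ᶜ = 0) :
    Alow m ≤ Bhigh m := Alow_le hI (Bhigh_mem hm hI)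

lemma Alow_mem_Icc {m : Measure ℝ} (hm : m ≠ 0) (hI : m (Icc (0:ℝ) 1)ᶜ = 0) :
    Alow m ∈ Icc (0:ℝ) 1 := msupport_subset_Icc hI (Alow_mem hm hI)

lemma Bhigh_mem_Icc {m : Measure ℝ} (hm : m ≠ 0) (hI : m (Icc (0:ℝ) 1)ᶜ = 0) :
    Bhigh m ∈ Icc (0:ℝ) 1 := msupport_subset_Icc hI (Bhigh_mem hm hI)

lemma null_Iio_Alow {m : Measure ℝ} (hI : m (Icc (0:ℝ) 1)ᶜ = 0) :
    m (Iio (Alow m)) = 0 := by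
  refine measure_mono_null ?_ (compl_msupport_null m)
  intro x hx hmem
  exact absurd (Alow_le hI hmem) (not_le.mpr hx)

lemma null_Ioi_Bhigh {m : Measure ℝ} (hI : m (Icc (0:ℝ) 1)ᶜ = 0) :
    m (Ioi (Bhigh m)) = 0 := by
  refine measure_mono_null ?_ (compl_msupport_null m)
  intro x hx hmem
  exact absurd (le_Bhigh hI hmem) (not_le.mpr hx)

/-- A support point has positive measure in each interval around it,
even after intersecting with `[0,1]`. -/
lemma pos_of_mem_msupport {m : Measure ℝ} (hI : m (Icc (0:ℝ) 1)ᶜ = 0) {y : ℝ}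
    (hy : y ∈ msupport m) {ε : ℝ} (hε : 0 < ε) :
    0 < m (Ioo (y - ε) (y + ε) ∩ Icc 0 1) := by
  have h1 : m (Ioo (y - ε) (y + ε)) ≤ m (Ioo (y - ε) (y + ε) ∩ Icc 0 1) := by
    calc m (Ioo (y - ε) (y + ε))
        ≤ m (Ioo (y - ε) (y + ε) ∩ Icc 0 1) + m (Icc (0:ℝ) 1)ᶜ :=
          measure_mono (fun z hz => by
            by_cases hzI : z ∈ Icc (0:ℝ) 1
            · exact Or.inl ⟨hz, hzI⟩
            · exact Or.inr hzI)
            |>.trans (measure_union_le _ _)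
      _ = m (Ioo (y - ε) (y + ε) ∩ Icc 0 1) := by rw [hI, add_zero]
  exact lt_of_lt_of_le (hy ε hε) h1
/-! ### Stationary measures -/

lemma stat_mass_le_one {S : Sys N} {μ : Fin N → Measure ℝ} (hst : IsStationary S μ)
    (k : Fin N) : μ k univ ≤ 1 := by
  rw [← hst.2.1]
  exact Finset.single_le_sum (f := fun i => μ i univ) (fun i _ => zero_le) (Finset.mem_univ k)

lemma stat_apply_le {S : Sys N} {μ : Fin N → Measure ℝ} (hst : IsStationary S μ)
    (i j : Fin N) {E : Set ℝ} (hE : MeasurableSet E) :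
    ENNReal.ofReal (S.P i j) * μ i (S.f i ⁻¹' E) ≤ μ j E := by
  have h := hst.2.2.2 j
  rw [h]
  have happ : (∑ i', ENNReal.ofReal (S.P i' j) • (μ i').map (S.f i')) E
      = ∑ i', ENNReal.ofReal (S.P i' j) * ((μ i').map (S.f i')) E := by
    rw [Measure.finset_sum_apply]
    simp [Measure.smul_apply, smul_eq_mul]
  rw [happ]
  have : ENNReal.ofReal (S.P i j) * μ i (S.f i ⁻¹' E)
      = ENNReal.ofReal (S.P i j) * ((μ i).map (S.f i)) E := by
    rw [Measure.map_apply (S.f_meas i) hE]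
  rw [this]
  exact Finset.single_le_sum (f := fun i' => ENNReal.ofReal (S.P i' j) * ((μ i').map (S.f i')) E) (fun i' _ => zero_le) (Finset.mem_univ i)

lemma stat_mass_pos {S : Sys N} {μ : Fin N → Measure ℝ} (hst : IsStationary S μ)
    (k : Fin N) : μ k ≠ 0 := by
  have hstep : ∀ i j, Adm S i j → μ i ≠ 0 → μ j ≠ 0 := by
    intro i j hij hi
    have hPij : 0 < S.P i j := (S.P_pos_iff i j).mpr hij
    have h := stat_apply_le hst i j MeasurableSet.univ
    rw [preimage_univ] at h
    intro hj0
    rw [hj0] at h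
    simp only [Measure.coe_zero, Pi.zero_apply, nonpos_iff_eq_zero, mul_eq_zero] at h
    rcases h with h | h
    · rw [ENNReal.ofReal_eq_zero] at h; linarith
    · rw [Measure.measure_univ_eq_zero] at h; exact hi h
  -- some i has positive mass
  have hex : ∃ i, μ i ≠ 0 := by
    by_contra hc
    push_neg at hc
    have : (∑ i, μ i univ) = 0 := Finset.sum_eq_zero (fun i _ => by rw [hc i]; rfl)
    rw [hst.2.1] at this
    exact one_ne_zero this
  obtain ⟨i, hi⟩ := hex
  obtain ⟨n, _, hpos⟩ := S.transitive
  exact path_prop S (fun k => μ k ≠ 0) hstep n i k (hpos i k) hi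

/-- Pushing a support point by an admissible map lands in the support. -/
lemma push_msupport {S : Sys N} {μ : Fin N → Measure ℝ} (hst : IsStationary S μ)
    {i j : Fin N} (hij : Adm S i j) {y : ℝ} (hy : y ∈ msupport (μ i)) :
    S.f i y ∈ msupport (μ j) := by
  have hyI : y ∈ Icc (0:ℝ) 1 := msupport_subset_Icc (hst.2.2.1 i) hy
  intro ε hε
  -- continuity within Icc at y
  have hcont : ContinuousWithinAt (S.f i) (Icc 0 1) y :=
    (S.f_contDiff i).continuousOn y hyI
  rw [Metric.continuousWithinAt_iff] at hcont
  obtain ⟨δ, hδ, hδ'⟩ := hcont ε hε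
  have key : Ioo (y - δ) (y + δ) ∩ Icc 0 1 ⊆ S.f i ⁻¹' (Ioo (S.f i y - ε) (S.f i y + ε)) := by
    intro x hx
    have hd : dist x y < δ := by
      rw [Real.dist_eq, abs_lt]
      constructor
      · have := hx.1.1; linarith
      · have := hx.1.2; linarith
    have := hδ' hx.2 hd
    rw [Real.dist_eq, abs_lt] at this
    exact mem_Ioo.mpr ⟨by linarith [this.1], by linarith [this.2]⟩
  have h1 : 0 < μ i (S.f i ⁻¹' (Ioo (S.f i y - ε) (S.f i y + ε))) :=
    lt_of_lt_of_le (pos_of_mem_msupport (hst.2.2.1 i) hy hδ) (measure_mono key)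
  have h2 := stat_apply_le hst i j (measurableSet_Ioo :
    MeasurableSet (Ioo (S.f i y - ε) (S.f i y + ε)))
  have hP : 0 < ENNReal.ofReal (S.P i j) :=
    ENNReal.ofReal_pos.mpr ((S.P_pos_iff i j).mpr hij)
  calc (0:ℝ≥0∞) < ENNReal.ofReal (S.P i j) * μ i (S.f i ⁻¹' (Ioo (S.f i y - ε) (S.f i y + ε))) :=
        ENNReal.mul_pos (ne_of_gt hP) (ne_of_gt h1)
    _ ≤ μ j (Ioo (S.f i y - ε) (S.f i y + ε)) := h2
lemma f_mono_le {S : Sys N} (i : Fin N) {x y : ℝ} (hx : x ∈ Icc (0:ℝ) 1)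
    (hy : y ∈ Icc (0:ℝ) 1) (hxy : x ≤ y) : S.f i x ≤ S.f i y :=
  (S.f_mono i).monotoneOn hx hy hxy

lemma Alow_le_push {S : Sys N} {μ : Fin N → Measure ℝ} (hst : IsStationary S μ)
    {i j : Fin N} (hij : Adm S i j) {y : ℝ} (hy : y ∈ msupport (μ i)) :
    Alow (μ j) ≤ S.f i y :=
  Alow_le (hst.2.2.1 j) (push_msupport hst hij hy)

lemma push_le_Bhigh {S : Sys N} {μ : Fin N → Measure ℝ} (hst : IsStationary S μ)
    {i j : Fin N} (hij : Adm S i j) {y : ℝ} (hy : y ∈ msupport (μ i)) :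
    S.f i y ≤ Bhigh (μ j) :=
  le_Bhigh (hst.2.2.1 j) (push_msupport hst hij hy)
/-- The zero-or-full dichotomy for absorbing families, from ergodicity. -/
lemma zero_or_full {S : Sys N} {μ : Fin N → Measure ℝ} (herg : IsErgodicStationary S μ)
    (K : Fin N → Set ℝ) (hKm : ∀ k, MeasurableSet (K k))
    (habs : ∀ i j, Adm S i j → ∀ x ∈ K i ∩ Icc (0:ℝ) 1, S.f i x ∈ K j) :
    (∀ k, μ k (K k) = 0) ∨ (∀ k, μ k (K k)ᶜ = 0) := by
  obtain ⟨hst, hext⟩ := herg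
  set μ' : Fin N → Measure ℝ := fun k => (μ k).restrict (K k) with hμ'
  set μ'' : Fin N → Measure ℝ := fun k => (μ k).restrict (K k)ᶜ with hμ''
  have hsplit : ∀ k, μ' k + μ'' k = μ k := fun k =>
    Measure.restrict_add_restrict_compl (hKm k)
  -- masses
  have hμ'le : ∀ k, ∀ E : Set ℝ, μ' k E ≤ μ k E := fun k E =>
    Measure.restrict_le_self E
  have hfinμ : ∀ k, μ k univ ≤ 1 := stat_mass_le_one hst
  have hfinμ' : ∀ k, μ' k univ ≤ 1 := fun k => le_trans (hμ'le k univ) (hfinμ k)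
  -- the pushed measure
  set ρ : Fin N → Measure ℝ := fun j => ∑ i, ENNReal.ofReal (S.P i j) • (μ' i).map (S.f i)
    with hρdef
  have hρ_apply : ∀ j (E : Set ℝ), MeasurableSet E →
      ρ j E = ∑ i, ENNReal.ofReal (S.P i j) * μ i (S.f i ⁻¹' E ∩ K i) := by
    intro j E hE
    rw [hρdef]
    rw [Measure.finset_sum_apply]
    refine Finset.sum_congr rfl (fun i _ => ?_)
    rw [Measure.smul_apply, smul_eq_mul, Measure.map_apply (S.f_meas i) hE, hμ',
      Measure.restrict_apply (hE.preimage (S.f_meas i))]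
  -- ρ j vanishes outside K j
  have hρ_compl : ∀ j, ρ j (K j)ᶜ = 0 := by
    intro j
    rw [hρ_apply j _ (hKm j).compl]
    refine Finset.sum_eq_zero (fun i _ => ?_)
    by_cases hP : S.P i j ≤ 0
    · rw [ENNReal.ofReal_eq_zero.mpr hP, zero_mul]
    · push_neg at hP
      have hadm : Adm S i j := (S.P_pos_iff i j).mp hP
      have hnull : μ i (S.f i ⁻¹' (K j)ᶜ ∩ K i) = 0 := by
        refine measure_mono_null ?_ (hst.2.2.1 i)
        intro x hx
        intro hxI
        exact hx.1 (habs i j hadm x ⟨hx.2, hxI⟩)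
      rw [hnull, mul_zero]
  -- ρ j ≤ μ j on measurable sets
  have hρ_le : ∀ j (E : Set ℝ), MeasurableSet E → ρ j E ≤ μ j E := by
    intro j E hE
    rw [hρ_apply j E hE]
    have h2 : ∀ i, ENNReal.ofReal (S.P i j) * μ i (S.f i ⁻¹' E ∩ K i)
        ≤ ENNReal.ofReal (S.P i j) * ((μ i).map (S.f i)) E := by
      intro i
      refine mul_le_mul_right ?_ _
      rw [Measure.map_apply (S.f_meas i) hE]
      exact measure_mono inter_subset_left
    calc ∑ i, ENNReal.ofReal (S.P i j) * μ i (S.f i ⁻¹' E ∩ K i)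
        ≤ ∑ i, ENNReal.ofReal (S.P i j) * ((μ i).map (S.f i)) E :=
          Finset.sum_le_sum (fun i _ => h2 i)
      _ = (∑ i, ENNReal.ofReal (S.P i j) • (μ i).map (S.f i)) E := by
          rw [Measure.finset_sum_apply]; simp [Measure.smul_apply, smul_eq_mul]
      _ = μ j E := by rw [← hst.2.2.2 j]
  -- hence ρ j ≤ μ' j on measurable sets
  have hρ_le' : ∀ j (E : Set ℝ), MeasurableSet E → ρ j E ≤ μ' j E := by
    intro j E hE
    have h1 : ρ j E = ρ j (E ∩ K j) + ρ j (E \ K j) :=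
      (measure_inter_add_diff E (hKm j)).symm
    have h2 : ρ j (E \ K j) = 0 :=
      measure_mono_null (fun x hx => hx.2) (hρ_compl j)
    rw [h1, h2, add_zero]
    calc ρ j (E ∩ K j) ≤ μ j (E ∩ K j) := hρ_le j _ (hE.inter (hKm j))
      _ = μ' j E := (Measure.restrict_apply hE).symm
  -- total masses of ρ and μ' agree in sum
  have hmass_sum : ∑ j, ρ j univ = ∑ j, μ' j univ := by
    have h1 : ∀ j, ρ j univ = ∑ i, ENNReal.ofReal (S.P i j) * μ' i univ := by
      intro j
      rw [hρ_apply j univ MeasurableSet.univ]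
      refine Finset.sum_congr rfl (fun i _ => ?_)
      rw [preimage_univ, univ_inter, hμ', Measure.restrict_apply MeasurableSet.univ, univ_inter]
    calc ∑ j, ρ j univ = ∑ j, ∑ i, ENNReal.ofReal (S.P i j) * μ' i univ :=
          Finset.sum_congr rfl (fun j _ => h1 j)
      _ = ∑ i, (∑ j, ENNReal.ofReal (S.P i j)) * μ' i univ := by
          rw [Finset.sum_comm]
          exact Finset.sum_congr rfl (fun i _ => (Finset.sum_mul _ _ _).symm)
      _ = ∑ i, μ' i univ := by
          refine Finset.sum_congr rfl (fun i _ => ?_)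
          rw [← ENNReal.ofReal_sum_of_nonneg (fun j _ => S.P_nonneg i j), S.P_row i,
            ENNReal.ofReal_one, one_mul]
  -- hence total masses agree componentwise
  have hmass : ∀ j, ρ j univ = μ' j univ := by
    intro j0
    refine le_antisymm (hρ_le' j0 univ MeasurableSet.univ) ?_
    have herase : ∀ g : Fin N → ℝ≥0∞,
        ∑ j ∈ Finset.univ.erase j0, g j + g j0 = ∑ j, g j :=
      fun g => Finset.sum_erase_add _ _ (Finset.mem_univ j0)
    have hfin_erase : (∑ j ∈ Finset.univ.erase j0, ρ j univ) ≠ ⊤ := by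
      refine (ENNReal.sum_lt_top.mpr (fun j _ => ?_)).ne
      exact lt_of_le_of_lt (le_trans (hρ_le' j univ MeasurableSet.univ) (hfinμ' j))
        ENNReal.one_lt_top
    have h1 : μ' j0 univ + ∑ j ∈ Finset.univ.erase j0, ρ j univ
        ≤ ρ j0 univ + ∑ j ∈ Finset.univ.erase j0, ρ j univ := by
      calc μ' j0 univ + ∑ j ∈ Finset.univ.erase j0, ρ j univ
          ≤ μ' j0 univ + ∑ j ∈ Finset.univ.erase j0, μ' j univ :=
            add_le_add_right (Finset.sum_le_sum
              (fun j _ => hρ_le' j univ MeasurableSet.univ)) _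
        _ = ∑ j, μ' j univ := by rw [add_comm]; exact herase _
        _ = ∑ j, ρ j univ := hmass_sum.symm
        _ = ρ j0 univ + ∑ j ∈ Finset.univ.erase j0, ρ j univ := by
            rw [add_comm]; exact (herase _).symm
    exact (ENNReal.add_le_add_iff_right hfin_erase).mp h1
  -- ρ j = μ' j as measures
  have hρ_eq : ∀ j, ρ j = μ' j := by
    intro j
    ext E hE
    have h1 : ρ j E + ρ j Eᶜ = μ' j E + μ' j Eᶜ := by
      rw [measure_add_measure_compl hE, measure_add_measure_compl hE, hmass j]
    have h2 : ρ j E ≤ μ' j E := hρ_le' j E hE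
    have h3 : ρ j Eᶜ ≤ μ' j Eᶜ := hρ_le' j Eᶜ hE.compl
    have hfin : ρ j Eᶜ ≠ ⊤ := by
      refine ne_top_of_le_ne_top (ne_top_of_le_ne_top ENNReal.one_ne_top (hfinμ' j)) ?_
      exact le_trans (hρ_le' j Eᶜ hE.compl) (measure_mono (subset_univ _))
    -- from h1, h2, h3 conclude ρ j E = μ' j E
    by_contra hne
    have hlt : ρ j E < μ' j E := lt_of_le_of_ne h2 hne
    have : ρ j E + ρ j Eᶜ < μ' j E + μ' j Eᶜ :=
      ENNReal.add_lt_add_of_lt_of_le hfin hlt h3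
    rw [h1] at this
    exact lt_irrefl _ this
  -- μ'' is stationary too
  have hρ''_eq : ∀ j, (∑ i, ENNReal.ofReal (S.P i j) • (μ'' i).map (S.f i)) = μ'' j := by
    intro j
    have hsum : μ' j + (∑ i, ENNReal.ofReal (S.P i j) • (μ'' i).map (S.f i))
        = μ' j + μ'' j := by
      calc μ' j + (∑ i, ENNReal.ofReal (S.P i j) • (μ'' i).map (S.f i))
          = ρ j + (∑ i, ENNReal.ofReal (S.P i j) • (μ'' i).map (S.f i)) := by
            rw [hρ_eq j]
        _ = ∑ i, (ENNReal.ofReal (S.P i j) • (μ' i).map (S.f i)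
              + ENNReal.ofReal (S.P i j) • (μ'' i).map (S.f i)) := by
            rw [hρdef, Finset.sum_add_distrib]
        _ = ∑ i, ENNReal.ofReal (S.P i j) • (μ i).map (S.f i) := by
            refine Finset.sum_congr rfl (fun i _ => ?_)
            rw [← smul_add, ← Measure.map_add _ _ (S.f_meas i), hsplit i]
        _ = μ j := (hst.2.2.2 j).symm
        _ = μ' j + μ'' j := (hsplit j).symm
    -- cancel the finite measure μ' j
    ext E hE
    have h := congrArg (fun ν : Measure ℝ => ν E) hsum
    simp only [Measure.coe_add, Pi.add_apply] at h
    have hfin : μ' j E ≠ ⊤ :=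
      ne_top_of_le_ne_top (ne_top_of_le_ne_top ENNReal.one_ne_top (hfinμ' j))
        (measure_mono (subset_univ _))
    exact (ENNReal.add_right_inj hfin).mp h
  -- masses
  have hμ'univ : ∀ k, μ' k univ = μ k (K k) := by
    intro k
    rw [hμ', Measure.restrict_apply MeasurableSet.univ, univ_inter]
  have hμ''univ : ∀ k, μ'' k univ = μ k (K k)ᶜ := by
    intro k
    rw [hμ'', Measure.restrict_apply MeasurableSet.univ, univ_inter]
  set s : ℝ≥0∞ := ∑ k, μ' k univ with hs
  have hs_le : s ≤ 1 := by
    rw [hs, ← hst.2.1]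
    exact Finset.sum_le_sum (fun k _ => hμ'le k univ)
  have hsfin : s ≠ ⊤ := ne_top_of_le_ne_top ENNReal.one_ne_top hs_le
  have htotal : s + ∑ k, μ'' k univ = 1 := by
    rw [hs, ← Finset.sum_add_distrib, ← hst.2.1]
    refine Finset.sum_congr rfl (fun k _ => ?_)
    have h := congrArg (fun ν : Measure ℝ => ν univ) (hsplit k)
    simpa [Measure.coe_add, Pi.add_apply] using h
  by_cases hs0 : s = 0
  · left
    intro k
    have hk : μ' k univ = 0 := by
      have := (Finset.sum_eq_zero_iff.mp hs0) k (Finset.mem_univ k)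
      exact this
    rwa [hμ'univ k] at hk
  by_cases hs1 : s = 1
  · right
    intro k
    rw [hs1] at htotal
    have hx : ∑ k, μ'' k univ = 0 := by
      have h : (1:ℝ≥0∞) + ∑ k, μ'' k univ = 1 + 0 := by
        rw [add_zero]; exact htotal
      exact (ENNReal.add_right_inj ENNReal.one_ne_top).mp h
    have hk : μ'' k univ = 0 := (Finset.sum_eq_zero_iff.mp hx) k (Finset.mem_univ k)
    rwa [hμ''univ k] at hk
  -- the nontrivial case: contradiction with ergodicity
  exfalso
  have hs_lt : s < 1 := lt_of_le_of_ne hs_le hs1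
  have h1s0 : (1:ℝ≥0∞) - s ≠ 0 := by
    rw [ne_eq, tsub_eq_zero_iff_le]
    exact not_le.mpr hs_lt
  have h1sfin : (1:ℝ≥0∞) - s ≠ ⊤ :=
    ne_top_of_le_ne_top ENNReal.one_ne_top tsub_le_self
  have hmass'' : ∑ k, μ'' k univ = 1 - s :=
    ENNReal.eq_sub_of_add_eq hsfin (by rw [add_comm]; exact htotal)
  set ν₁ : Fin N → Measure ℝ := fun k => s⁻¹ • μ' k with hν₁
  set ν₂ : Fin N → Measure ℝ := fun k => (1 - s)⁻¹ • μ'' k with hν₂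
  have hν₁univ : ∀ k (E : Set ℝ), ν₁ k E = s⁻¹ * μ' k E := by
    intro k E
    show (s⁻¹ • μ' k) E = _
    rw [Measure.smul_apply, smul_eq_mul]
  have hν₂univ : ∀ k (E : Set ℝ), ν₂ k E = (1 - s)⁻¹ * μ'' k E := by
    intro k E
    show ((1 - s)⁻¹ • μ'' k) E = _
    rw [Measure.smul_apply, smul_eq_mul]
  -- ν₁ is stationary
  have hstat₁ : IsStationary S ν₁ := by
    refine ⟨fun k => ?_, ?_, fun k => ?_, fun j => ?_⟩
    · constructor
      rw [hν₁univ k univ]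
      exact ENNReal.mul_lt_top (ENNReal.inv_lt_top.mpr (pos_iff_ne_zero.mpr hs0))
        (lt_of_le_of_lt (hfinμ' k) ENNReal.one_lt_top)
    · have : ∑ k, ν₁ k univ = s⁻¹ * s := by
        rw [hs, Finset.mul_sum]
        exact Finset.sum_congr rfl (fun k _ => hν₁univ k univ)
      rw [this, ENNReal.inv_mul_cancel hs0 hsfin]
    · rw [hν₁univ k _]
      have : μ' k (Icc (0:ℝ) 1)ᶜ = 0 :=
        le_antisymm (le_trans (hμ'le k _) (le_of_eq (hst.2.2.1 k))) (zero_le)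
      rw [this, mul_zero]
    · show s⁻¹ • μ' j = ∑ i, ENNReal.ofReal (S.P i j) • ((s⁻¹ • μ' i).map (S.f i))
      have hsum : (∑ i, ENNReal.ofReal (S.P i j) • (μ' i).map (S.f i)) = μ' j := hρ_eq j
      calc s⁻¹ • μ' j = s⁻¹ • ∑ i, ENNReal.ofReal (S.P i j) • (μ' i).map (S.f i) := by
            rw [hsum]
        _ = ∑ i, s⁻¹ • (ENNReal.ofReal (S.P i j) • (μ' i).map (S.f i)) := Finset.smul_sum
        _ = ∑ i, ENNReal.ofReal (S.P i j) • ((s⁻¹ • μ' i).map (S.f i)) := by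
            refine Finset.sum_congr rfl (fun i _ => ?_)
            rw [Measure.map_smul, smul_smul, smul_smul, mul_comm]
  -- ν₂ is stationary
  have hstat₂ : IsStationary S ν₂ := by
    refine ⟨fun k => ?_, ?_, fun k => ?_, fun j => ?_⟩
    · constructor
      rw [hν₂univ k univ]
      refine ENNReal.mul_lt_top (ENNReal.inv_lt_top.mpr (pos_iff_ne_zero.mpr h1s0)) ?_
      refine lt_of_le_of_lt ?_ ENNReal.one_lt_top
      exact le_trans (Measure.restrict_le_self univ) (hfinμ k)
    · have : ∑ k, ν₂ k univ = (1-s)⁻¹ * ∑ k, μ'' k univ := by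
        rw [Finset.mul_sum]
        exact Finset.sum_congr rfl (fun k _ => hν₂univ k univ)
      rw [this, hmass'', ENNReal.inv_mul_cancel h1s0 h1sfin]
    · rw [hν₂univ k _]
      have : μ'' k (Icc (0:ℝ) 1)ᶜ = 0 :=
        le_antisymm (le_trans (Measure.restrict_le_self _) (le_of_eq (hst.2.2.1 k)))
          (zero_le)
      rw [this, mul_zero]
    · show (1 - s)⁻¹ • μ'' j = ∑ i, ENNReal.ofReal (S.P i j) • (((1 - s)⁻¹ • μ'' i).map (S.f i))
      calc (1 - s)⁻¹ • μ'' j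
          = (1 - s)⁻¹ • ∑ i, ENNReal.ofReal (S.P i j) • (μ'' i).map (S.f i) := by
            rw [hρ''_eq j]
        _ = ∑ i, (1 - s)⁻¹ • (ENNReal.ofReal (S.P i j) • (μ'' i).map (S.f i)) :=
            Finset.smul_sum
        _ = ∑ i, ENNReal.ofReal (S.P i j) • (((1 - s)⁻¹ • μ'' i).map (S.f i)) := by
            refine Finset.sum_congr rfl (fun i _ => ?_)
            rw [Measure.map_smul, smul_smul, smul_smul, mul_comm]
  -- decomposition of μ
  have hdecomp : ∀ k, μ k = s • ν₁ k + (1 - s) • ν₂ k := by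
    intro k
    show μ k = s • (s⁻¹ • μ' k) + (1 - s) • ((1 - s)⁻¹ • μ'' k)
    rw [smul_smul, smul_smul, ENNReal.mul_inv_cancel hs0 hsfin,
      ENNReal.mul_inv_cancel h1s0 h1sfin, one_smul, one_smul, hsplit k]
  have heq : ν₁ = ν₂ := hext ν₁ ν₂ hstat₁ hstat₂ s (pos_iff_ne_zero.mpr hs0) hs_lt hdecomp
  -- contradiction
  have hv1 : ∑ k, ν₁ k (K k) = 1 := by
    have h1 : ∀ k, ν₁ k (K k) = s⁻¹ * μ' k univ := by
      intro k
      rw [hν₁univ k _]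
      congr 1
      show (μ k).restrict (K k) (K k) = (μ k).restrict (K k) univ
      rw [Measure.restrict_apply (hKm k), inter_self,
        Measure.restrict_apply MeasurableSet.univ, univ_inter]
    calc ∑ k, ν₁ k (K k) = ∑ k, s⁻¹ * μ' k univ :=
          Finset.sum_congr rfl (fun k _ => h1 k)
      _ = s⁻¹ * s := by rw [← Finset.mul_sum, hs]
      _ = 1 := ENNReal.inv_mul_cancel hs0 hsfin
  have hv2 : ∑ k, ν₂ k (K k) = 0 := by
    refine Finset.sum_eq_zero (fun k _ => ?_)
    rw [hν₂univ k _]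
    have h0 : μ'' k (K k) = 0 := by
      show (μ k).restrict (K k)ᶜ (K k) = 0
      rw [Measure.restrict_apply (hKm k), inter_compl_self, measure_empty]
    rw [h0, mul_zero]
  rw [heq, hv2] at hv1
  exact zero_ne_one hv1
lemma Iic_ne_zero_of_Alow_lt {m : Measure ℝ} (hm : m ≠ 0) (hI : m (Icc (0:ℝ) 1)ᶜ = 0)
    {t : ℝ} (ht : Alow m < t) : m (Iic t) ≠ 0 := by
  have hmem := Alow_mem hm hI
  have hε : 0 < t - Alow m := by linarith
  have hpos := hmem (t - Alow m) hε
  have hsub : Ioo (Alow m - (t - Alow m)) (Alow m + (t - Alow m)) ⊆ Iic t := by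
    intro x hx
    have := (mem_Ioo.mp hx).2
    exact mem_Iic.mpr (by linarith)
  exact pos_iff_ne_zero.mp (lt_of_lt_of_le hpos (measure_mono hsub))

lemma Ici_ne_zero_of_lt_Bhigh {m : Measure ℝ} (hm : m ≠ 0) (hI : m (Icc (0:ℝ) 1)ᶜ = 0)
    {t : ℝ} (ht : t < Bhigh m) : m (Ici t) ≠ 0 := by
  have hmem := Bhigh_mem hm hI
  have hε : 0 < Bhigh m - t := by linarith
  have hpos := hmem (Bhigh m - t) hε
  have hsub : Ioo (Bhigh m - (Bhigh m - t)) (Bhigh m + (Bhigh m - t)) ⊆ Ici t := by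
    intro x hx
    have := (mem_Ioo.mp hx).1
    exact mem_Ici.mpr (by linarith)
  exact pos_iff_ne_zero.mp (lt_of_lt_of_le hpos (measure_mono hsub))

lemma Bhigh_le_of_compl_Iic_null {m : Measure ℝ} (hm : m ≠ 0) (hI : m (Icc (0:ℝ) 1)ᶜ = 0)
    {t : ℝ} (h0 : m (Iic t)ᶜ = 0) : Bhigh m ≤ t := by
  by_contra hc
  push_neg at hc
  have hmem := Bhigh_mem hm hI
  have hε : 0 < Bhigh m - t := by linarith
  have hpos := hmem (Bhigh m - t) hε
  have hsub : Ioo (Bhigh m - (Bhigh m - t)) (Bhigh m + (Bhigh m - t)) ⊆ (Iic t)ᶜ := by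
    intro x hx
    have := (mem_Ioo.mp hx).1
    simp only [mem_compl_iff, mem_Iic, not_le]
    linarith
  have := lt_of_lt_of_le hpos (measure_mono hsub)
  rw [h0] at this
  exact lt_irrefl 0 this

lemma le_Alow_of_compl_Ici_null {m : Measure ℝ} (hm : m ≠ 0) (hI : m (Icc (0:ℝ) 1)ᶜ = 0)
    {t : ℝ} (h0 : m (Ici t)ᶜ = 0) : t ≤ Alow m := by
  by_contra hc
  push_neg at hc
  have hmem := Alow_mem hm hI
  have hε : 0 < t - Alow m := by linarith
  have hpos := hmem (t - Alow m) hε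
  have hsub : Ioo (Alow m - (t - Alow m)) (Alow m + (t - Alow m)) ⊆ (Ici t)ᶜ := by
    intro x hx
    have := (mem_Ioo.mp hx).2
    simp only [mem_compl_iff, mem_Ici, not_le]
    linarith
  have := lt_of_lt_of_le hpos (measure_mono hsub)
  rw [h0] at this
  exact lt_irrefl 0 this

/-- Propagation of the strict vertical order along admissible transitions, in the
everywhere-disjoint case. -/
lemma order_propagate {S : Sys N} {μ ν : Fin N → Measure ℝ} (hstμ : IsStationary S μ)
    (hstν : IsStationary S ν)
    (hdisj : ∀ j, Bhigh (μ j) < Alow (ν j) ∨ Bhigh (ν j) < Alow (μ j)) :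
    ∀ k j, Adm S k j → Bhigh (μ k) < Alow (ν k) → Bhigh (μ j) < Alow (ν j) := by
  intro k j hkj hlt
  rcases hdisj j with h | h
  · exact h
  · exfalso
    have hmB := Bhigh_mem (stat_mass_pos hstμ k) (hstμ.2.2.1 k)
    have hmA := Alow_mem (stat_mass_pos hstν k) (hstν.2.2.1 k)
    have hBI : Bhigh (μ k) ∈ Icc (0:ℝ) 1 := msupport_subset_Icc (hstμ.2.2.1 k) hmB
    have hAI : Alow (ν k) ∈ Icc (0:ℝ) 1 := msupport_subset_Icc (hstν.2.2.1 k) hmA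
    have h1 : Alow (μ j) ≤ S.f k (Bhigh (μ k)) := Alow_le_push hstμ hkj hmB
    have h2 : S.f k (Bhigh (μ k)) < S.f k (Alow (ν k)) := (S.f_mono k) hBI hAI hlt
    have h3 : S.f k (Alow (ν k)) ≤ Bhigh (ν j) := push_le_Bhigh hstν hkj hmA
    have h4 : Alow (μ j) ≤ Bhigh (μ j) :=
      Alow_le_Bhigh (stat_mass_pos hstμ j) (hstμ.2.2.1 j)
    linarith

/-- the support intervals of two ergodic stationary measures either coincide
for every symbol or are disjoint for every symbol, in the same vertical order. -/
theorem statement14 {N : ℕ} (S : Sys N) (hgen : IsGeneric S)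
    (μ₁ μ₂ : Fin N → Measure ℝ)
    (h₁ : IsErgodicStationary S μ₁) (h₂ : IsErgodicStationary S μ₂) :
    (∀ k, Alow (μ₁ k) = Alow (μ₂ k) ∧ Bhigh (μ₁ k) = Bhigh (μ₂ k)) ∨
    (∀ k, Bhigh (μ₁ k) < Alow (μ₂ k)) ∨ (∀ k, Bhigh (μ₂ k) < Alow (μ₁ k)) := by
  have hst1 := h₁.1
  have hst2 := h₂.1
  set A : Fin N → ℝ := fun k => Alow (μ₁ k) with hA
  set B : Fin N → ℝ := fun k => Bhigh (μ₁ k) with hB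
  set C : Fin N → ℝ := fun k => Alow (μ₂ k) with hC
  set D : Fin N → ℝ := fun k => Bhigh (μ₂ k) with hD
  have hne1 : ∀ k, μ₁ k ≠ 0 := stat_mass_pos hst1
  have hne2 : ∀ k, μ₂ k ≠ 0 := stat_mass_pos hst2
  have hI1 : ∀ k, μ₁ k (Icc (0:ℝ) 1)ᶜ = 0 := hst1.2.2.1
  have hI2 : ∀ k, μ₂ k (Icc (0:ℝ) 1)ᶜ = 0 := hst2.2.2.1
  have hAmem : ∀ k, A k ∈ msupport (μ₁ k) := fun k => Alow_mem (hne1 k) (hI1 k)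
  have hBmem : ∀ k, B k ∈ msupport (μ₁ k) := fun k => Bhigh_mem (hne1 k) (hI1 k)
  have hCmem : ∀ k, C k ∈ msupport (μ₂ k) := fun k => Alow_mem (hne2 k) (hI2 k)
  have hDmem : ∀ k, D k ∈ msupport (μ₂ k) := fun k => Bhigh_mem (hne2 k) (hI2 k)
  have hAI : ∀ k, A k ∈ Icc (0:ℝ) 1 := fun k => msupport_subset_Icc (hI1 k) (hAmem k)
  have hBI : ∀ k, B k ∈ Icc (0:ℝ) 1 := fun k => msupport_subset_Icc (hI1 k) (hBmem k)
  have hCI : ∀ k, C k ∈ Icc (0:ℝ) 1 := fun k => msupport_subset_Icc (hI2 k) (hCmem k)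
  have hDI : ∀ k, D k ∈ Icc (0:ℝ) 1 := fun k => msupport_subset_Icc (hI2 k) (hDmem k)
  have hAB : ∀ k, A k ≤ B k := fun k => Alow_le_Bhigh (hne1 k) (hI1 k)
  have hCD : ∀ k, C k ≤ D k := fun k => Alow_le_Bhigh (hne2 k) (hI2 k)
  obtain ⟨n, -, hprim⟩ := S.transitive
  by_cases hE : ∃ k x, (A k ≤ x ∧ x ≤ B k) ∧ (C k ≤ x ∧ x ≤ D k)
  · -- intersecting somewhere ⇒ intersecting everywhere ⇒ coincide everywhere
    obtain ⟨k₀, x₀, hx₀⟩ := hE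
    have hstep : ∀ k j, Adm S k j →
        (∃ x, (A k ≤ x ∧ x ≤ B k) ∧ (C k ≤ x ∧ x ≤ D k)) →
        (∃ x, (A j ≤ x ∧ x ≤ B j) ∧ (C j ≤ x ∧ x ≤ D j)) := by
      rintro k j hkj ⟨x, ⟨hAx, hxB⟩, ⟨hCx, hxD⟩⟩
      have hxI : x ∈ Icc (0:ℝ) 1 := ⟨le_trans (hAI k).1 hAx, le_trans hxB (hBI k).2⟩
      refine ⟨S.f k x, ⟨?_, ?_⟩, ?_, ?_⟩
      · exact le_trans (Alow_le_push hst1 hkj (hAmem k)) (f_mono_le k (hAI k) hxI hAx)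
      · exact le_trans (f_mono_le k hxI (hBI k) hxB) (push_le_Bhigh hst1 hkj (hBmem k))
      · exact le_trans (Alow_le_push hst2 hkj (hCmem k)) (f_mono_le k (hCI k) hxI hCx)
      · exact le_trans (f_mono_le k hxI (hDI k) hxD) (push_le_Bhigh hst2 hkj (hDmem k))
    have hall : ∀ m, ∃ x, (A m ≤ x ∧ x ≤ B m) ∧ (C m ≤ x ∧ x ≤ D m) := fun m =>
      path_prop S _ hstep n k₀ m (hprim k₀ m) ⟨x₀, hx₀⟩
    set a : Fin N → ℝ := fun m => max (A m) (C m) with ha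
    set b : Fin N → ℝ := fun m => min (B m) (D m) with hb
    have hab : ∀ m, a m ≤ b m := by
      intro m
      obtain ⟨x, ⟨h1, h2⟩, h3, h4⟩ := hall m
      exact le_trans (max_le h1 h3) (le_min h2 h4)
    have haI : ∀ m, a m ∈ Icc (0:ℝ) 1 :=
      fun m => ⟨le_trans (hAI m).1 (le_max_left _ _), max_le (hAI m).2 (hCI m).2⟩
    have hbI : ∀ m, b m ∈ Icc (0:ℝ) 1 :=
      fun m => ⟨le_min (hBI m).1 (hDI m).1, le_trans (min_le_left _ _) (hBI m).2⟩
    have hsub : ∀ i j, Adm S i j → a j ≤ S.f i (a i) := by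
      intro i j hij
      refine max_le ?_ ?_
      · exact le_trans (Alow_le_push hst1 hij (hAmem i))
          (f_mono_le i (hAI i) (haI i) (le_max_left _ _))
      · exact le_trans (Alow_le_push hst2 hij (hCmem i))
          (f_mono_le i (hCI i) (haI i) (le_max_right _ _))
    have hsup : ∀ i j, Adm S i j → S.f i (b i) ≤ b j := by
      intro i j hij
      refine le_min ?_ ?_
      · exact le_trans (f_mono_le i (hbI i) (hBI i) (min_le_left _ _))
          (push_le_Bhigh hst1 hij (hBmem i))
      · exact le_trans (f_mono_le i (hbI i) (hDI i) (min_le_right _ _))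
          (push_le_Bhigh hst2 hij (hDmem i))
    -- degenerate case kills genericity
    have hdone : (∀ m, a m = b m) → False := by
      intro habeq
      refine hgen.2.2 ⟨a, fun k => haI k, fun i j hij => ?_⟩
      refine le_antisymm ?_ (hsub i j hij)
      calc S.f i (a i) = S.f i (b i) := by rw [habeq i]
        _ ≤ b j := hsup i j hij
        _ = a j := (habeq j).symm
    -- four dichotomies
    have habs1 : ∀ i j, Adm S i j → ∀ x ∈ Iic (b i) ∩ Icc (0:ℝ) 1, S.f i x ∈ Iic (b j) := by
      intro i j hij x hx
      exact mem_Iic.mpr (le_trans (f_mono_le i hx.2 (hbI i) hx.1) (hsup i j hij))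
    have habs2 : ∀ i j, Adm S i j → ∀ x ∈ Ici (a i) ∩ Icc (0:ℝ) 1, S.f i x ∈ Ici (a j) := by
      intro i j hij x hx
      exact mem_Ici.mpr (le_trans (hsub i j hij) (f_mono_le i (haI i) hx.2 hx.1))
    have hd11 := zero_or_full h₁ (fun m => Iic (b m)) (fun m => measurableSet_Iic) habs1
    have hd21 := zero_or_full h₂ (fun m => Iic (b m)) (fun m => measurableSet_Iic) habs1
    have hd12 := zero_or_full h₁ (fun m => Ici (a m)) (fun m => measurableSet_Ici) habs2
    have hd22 := zero_or_full h₂ (fun m => Ici (a m)) (fun m => measurableSet_Ici) habs2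
    rcases hd11 with hz | hBb
    · refine (hdone (fun m => le_antisymm (hab m) ?_)).elim
      refine le_trans ?_ (le_max_left (A m) (C m))
      by_contra hc
      push_neg at hc
      exact Iic_ne_zero_of_Alow_lt (hne1 m) (hI1 m) hc (hz m)
    rcases hd21 with hz | hDb
    · refine (hdone (fun m => le_antisymm (hab m) ?_)).elim
      refine le_trans ?_ (le_max_right (A m) (C m))
      by_contra hc
      push_neg at hc
      exact Iic_ne_zero_of_Alow_lt (hne2 m) (hI2 m) hc (hz m)
    rcases hd12 with hz | haA
    · refine (hdone (fun m => le_antisymm (hab m) ?_)).elim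
      refine le_trans (min_le_left (B m) (D m)) ?_
      by_contra hc
      push_neg at hc
      exact Ici_ne_zero_of_lt_Bhigh (hne1 m) (hI1 m) hc (hz m)
    rcases hd22 with hz | haC
    · refine (hdone (fun m => le_antisymm (hab m) ?_)).elim
      refine le_trans (min_le_right (B m) (D m)) ?_
      by_contra hc
      push_neg at hc
      exact Ici_ne_zero_of_lt_Bhigh (hne2 m) (hI2 m) hc (hz m)
    -- all full: the intervals coincide
    left
    intro k
    have h1 : B k ≤ b k := Bhigh_le_of_compl_Iic_null (hne1 k) (hI1 k) (hBb k)
    have h2 : D k ≤ b k := Bhigh_le_of_compl_Iic_null (hne2 k) (hI2 k) (hDb k)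
    have h3 : a k ≤ A k := le_Alow_of_compl_Ici_null (hne1 k) (hI1 k) (haA k)
    have h4 : a k ≤ C k := le_Alow_of_compl_Ici_null (hne2 k) (hI2 k) (haC k)
    have hAa : A k = a k := le_antisymm (le_max_left _ _) h3
    have hCa : C k = a k := le_antisymm (le_max_right _ _) h4
    have hBb' : B k = b k := le_antisymm h1 (min_le_left _ _)
    have hDb' : D k = b k := le_antisymm h2 (min_le_right _ _)
    exact ⟨hAa.trans hCa.symm, hBb'.trans hDb'.symm⟩
  · -- disjoint everywhere
    push_neg at hE
    have hdisj : ∀ j, B j < C j ∨ D j < A j := by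
      intro j
      by_contra hc
      push_neg at hc
      obtain ⟨h1, h2⟩ := hc
      have hx := hE j (max (A j) (C j)) ⟨le_max_left _ _, max_le (hAB j) h1⟩
        (le_max_right _ _)
      exact absurd hx (not_lt.mpr (max_le h2 (hCD j)))
    have hNE : Nonempty (Fin N) := by
      by_contra hne
      have hempty : (Finset.univ : Finset (Fin N)) = ∅ :=
        Finset.univ_eq_empty_iff.mpr (not_nonempty_iff.mp hne)
      have h := hst1.2.1
      rw [hempty, Finset.sum_empty] at h
      exact zero_ne_one h
    obtain ⟨k₀⟩ := hNE
    rcases hdisj k₀ with hlt | hlt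
    · refine Or.inr (Or.inl (fun m => ?_))
      exact path_prop S (fun j => B j < C j)
        (fun i j hij => order_propagate hst1 hst2 hdisj i j hij)
        n k₀ m (hprim k₀ m) hlt
    · refine Or.inr (Or.inr (fun m => ?_))
      exact path_prop S (fun j => D j < A j)
        (fun i j hij => order_propagate hst2 hst1 (fun j => (hdisj j).symm) i j hij)
        n k₀ m (hprim k₀ m) hlt

end PaperSSP
end

section
/- Let F be a step skew product over a transitive subshift of finite type, ν an ergodic Markov measure on Σ, and S = S_{φ_1,φ_2} a trapping strip whose maximal attractor is a continuous-bony graph with graph part the graph of a function φ defined on a full ν-measure subset of Σ. Then the lift m_φ of ν to the graph of φ (the pushforward of ν under ω ↦ (ω, φ(ω))) is an SRB measure for F; its basin contains every point (ω,x) ∈ S whose base coordinate ω is Birkhoff-generic for ν, hence contains a subset of S of full standard measure in S. -/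
open MeasureTheory Set Filter Topology
open scoped ENNReal

namespace PaperSSP

variable {N : ℕ}

/-- `ω` is Birkhoff-generic for `ν`: the time averages of every continuous function along
the `σ`-orbit of `ω` converge to the `ν`-average. -/
def BirkhoffGeneric {N : ℕ} (S : Sys N) (ν : Measure (Sig S)) (ω : Sig S) : Prop :=
  ∀ g : C(Sig S, ℝ),
    Tendsto (fun n : ℕ => (∑ i ∈ Finset.range n, g ((shift S)^[i] ω)) / n) atTop
      (𝓝 (∫ ω', g ω' ∂ν))


set_option linter.unusedSectionVars false

namespace Birk


variable {α : Type*} [MeasurableSpace α] {T : α → α} {f : α → ℝ}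

noncomputable def bS (T : α → α) (f : α → ℝ) (n : ℕ) (x : α) : ℝ :=
  ∑ i ∈ Finset.range n, f (T^[i] x)

lemma bS_zero (x : α) : bS T f 0 x = 0 := by simp [bS]

lemma bS_succ' (n : ℕ) (x : α) : bS T f (n + 1) x = f x + bS T f n (T x) := by
  simp only [bS, Finset.sum_range_succ']
  simp [Function.iterate_succ_apply, add_comm]

lemma bS_measurable (hT : Measurable T) (hf : Measurable f) (n : ℕ) :
    Measurable (bS T f n) := by
  apply Finset.measurable_sum
  intro i _
  exact hf.comp (hT.iterate i)

lemma abs_bS_le {M : ℝ} (hM : ∀ x, |f x| ≤ M) (n : ℕ) (x : α) : |bS T f n x| ≤ n * M := by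
  calc |bS T f n x| ≤ ∑ i ∈ Finset.range n, |f (T^[i] x)| := Finset.abs_sum_le_sum_abs _ _
    _ ≤ ∑ _i ∈ Finset.range n, M := Finset.sum_le_sum fun i _ => hM _
    _ = n * M := by simp [mul_comm]

lemma bS_sub_const (c : ℝ) (n : ℕ) (x : α) :
    bS T (fun y => f y - c) n x = bS T f n x - n * c := by
  simp [bS, Finset.sum_sub_distrib, mul_comm]

lemma bS_neg (n : ℕ) (x : α) : bS T (fun y => - f y) n x = - bS T f n x := by
  simp [bS]

noncomputable def Ph (T : α → α) (f : α → ℝ) : ℕ → α → ℝ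
  | 0 => fun _ => 0
  | n + 1 => fun x => max (Ph T f n x) (bS T f (n + 1) x)

lemma Ph_zero (x : α) : Ph T f 0 x = 0 := rfl

lemma Ph_succ (n : ℕ) (x : α) : Ph T f (n + 1) x = max (Ph T f n x) (bS T f (n + 1) x) := rfl

lemma Ph_nonneg (n : ℕ) (x : α) : 0 ≤ Ph T f n x := by
  induction n with
  | zero => simp [Ph_zero]
  | succ n ih => rw [Ph_succ]; exact le_trans ih (le_max_left _ _)

lemma Ph_mono (x : α) : Monotone fun n => Ph T f n x :=
  monotone_nat_of_le_succ fun n => by rw [Ph_succ]; exact le_max_left _ _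

lemma bS_le_Ph {k n : ℕ} (hk : k ≤ n) (x : α) : bS T f k x ≤ Ph T f n x := by
  induction n with
  | zero =>
    have : k = 0 := Nat.le_zero.mp hk
    subst this; simp [bS_zero, Ph_zero]
  | succ n ih =>
    rcases Nat.lt_or_ge k (n + 1) with h | h
    · exact le_trans (ih (Nat.lt_succ_iff.mp h)) (by rw [Ph_succ]; exact le_max_left _ _)
    · have : k = n + 1 := le_antisymm hk h
      subst this; rw [Ph_succ]; exact le_max_right _ _

lemma Ph_eq_bS {n : ℕ} {x : α} (h : 0 < Ph T f n x) :
    ∃ k, 1 ≤ k ∧ k ≤ n ∧ Ph T f n x = bS T f k x := by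
  induction n with
  | zero => simp [Ph_zero] at h
  | succ n ih =>
    rw [Ph_succ] at h ⊢
    rcases le_total (bS T f (n + 1) x) (Ph T f n x) with hle | hle
    · rw [max_eq_left hle] at h ⊢
      obtain ⟨k, h1, h2, h3⟩ := ih h
      exact ⟨k, h1, h2.trans (Nat.le_succ n), h3⟩
    · exact ⟨n + 1, Nat.succ_le_succ (Nat.zero_le n), le_refl _, max_eq_right hle⟩

lemma Ph_measurable (hT : Measurable T) (hf : Measurable f) (n : ℕ) :
    Measurable (Ph T f n) := by
  induction n with
  | zero => simpa [Ph] using measurable_const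
  | succ n ih => exact ih.max (bS_measurable hT hf (n + 1))

lemma Ph_le {M : ℝ} (hM0 : 0 ≤ M) (hM : ∀ x, |f x| ≤ M) (n : ℕ) (x : α) :
    Ph T f n x ≤ n * M := by
  induction n with
  | zero => simp [Ph_zero]
  | succ n ih =>
    rw [Ph_succ, max_le_iff]
    constructor
    · exact ih.trans (by push_cast; nlinarith)
    · exact (le_abs_self _).trans (abs_bS_le hM (n + 1) x)

lemma abs_Ph_le {M : ℝ} (hM0 : 0 ≤ M) (hM : ∀ x, |f x| ≤ M) (n : ℕ) (x : α) :
    |Ph T f n x| ≤ n * M := by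
  rw [abs_of_nonneg (Ph_nonneg n x)]; exact Ph_le hM0 hM n x

lemma integrable_of_bounded {μ : Measure α} [IsFiniteMeasure μ] {g : α → ℝ} (hg : Measurable g)
    {C : ℝ} (hC : ∀ x, |g x| ≤ C) : Integrable g μ :=
  (integrable_const C).mono' hg.aestronglyMeasurable
    (ae_of_all _ (by simpa [Real.norm_eq_abs] using hC))

lemma maximal {μ : Measure α} [IsProbabilityMeasure μ] (hT : MeasurePreserving T μ μ)
    (hf : Measurable f) {M : ℝ} (hM0 : 0 ≤ M) (hM : ∀ x, |f x| ≤ M) (n : ℕ) :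
    0 ≤ ∫ x in {x | 0 < Ph T f n x}, f x ∂μ := by
  set E := {x | 0 < Ph T f n x} with hE
  have hPh := Ph_measurable hT.measurable hf n
  have hEm : MeasurableSet E := measurableSet_lt measurable_const hPh
  have hfi : Integrable f μ := integrable_of_bounded hf hM
  have hPhi : Integrable (Ph T f n) μ := integrable_of_bounded hPh (abs_Ph_le hM0 hM n)
  have hPhTi : Integrable (fun x => Ph T f n (T x)) μ :=
    integrable_of_bounded (hPh.comp hT.measurable) (fun x => abs_Ph_le hM0 hM n (T x))
  have hpt : ∀ x ∈ E, Ph T f n x - Ph T f n (T x) ≤ f x := by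
    intro x hx
    obtain ⟨k, hk1, hk2, hk3⟩ := Ph_eq_bS hx
    obtain ⟨j, rfl⟩ : ∃ j, k = j + 1 := ⟨k - 1, by omega⟩
    rw [hk3, bS_succ']
    have : bS T f j (T x) ≤ Ph T f n (T x) := bS_le_Ph (by omega) _
    linarith
  have h1 : ∫ x in E, (Ph T f n x - Ph T f n (T x)) ∂μ ≤ ∫ x in E, f x ∂μ :=
    setIntegral_mono_on (hPhi.sub hPhTi).integrableOn hfi.integrableOn hEm hpt
  have h2 : ∫ x in E, (Ph T f n x - Ph T f n (T x)) ∂μ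
      = ∫ x in E, Ph T f n x ∂μ - ∫ x in E, Ph T f n (T x) ∂μ :=
    integral_sub hPhi.integrableOn hPhTi.integrableOn
  have h3 : ∫ x in E, Ph T f n x ∂μ = ∫ x, Ph T f n x ∂μ := by
    have hcompl : ∫ x in Eᶜ, Ph T f n x ∂μ = 0 := by
      rw [setIntegral_congr_fun hEm.compl (g := fun _ => (0:ℝ))
        (fun x hx => le_antisymm (not_lt.mp hx) (Ph_nonneg n x))]
      simp
    have := integral_add_compl hEm hPhi
    linarith
  have h4 : ∫ x in E, Ph T f n (T x) ∂μ ≤ ∫ x, Ph T f n (T x) ∂μ :=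
    setIntegral_le_integral hPhTi (ae_of_all _ fun x => Ph_nonneg n (T x))
  have h5 : ∫ x, Ph T f n (T x) ∂μ = ∫ x, Ph T f n x ∂μ := by
    rw [← integral_map hT.measurable.aemeasurable hPh.aestronglyMeasurable, hT.map_eq]
  linarith

lemma maximal_iUnion {μ : Measure α} [IsProbabilityMeasure μ] (hT : MeasurePreserving T μ μ)
    (hf : Measurable f) {M : ℝ} (hM0 : 0 ≤ M) (hM : ∀ x, |f x| ≤ M) :
    0 ≤ ∫ x in ⋃ n, {x | 0 < Ph T f n x}, f x ∂μ := by
  have hmono : Monotone (fun n => {x | 0 < Ph T f n x}) :=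
    fun i j h x hx => lt_of_lt_of_le hx (Ph_mono x h)
  have hconv := MeasureTheory.tendsto_setIntegral_of_monotone
    (s := fun n => {x | 0 < Ph T f n x})
    (fun n => measurableSet_lt measurable_const (Ph_measurable hT.measurable hf n))
    hmono ((integrable_of_bounded (μ := μ) hf hM).integrableOn)
  exact ge_of_tendsto hconv (Eventually.of_forall fun n => maximal hT hf hM0 hM n)

def Bset (T : α → α) (f : α → ℝ) (q : ℝ) : Set α :=
  {x | ∀ k : ℕ, ∀ m : ℕ, ∃ n, m ≤ n ∧ q - 1 / (k + 1) < bS T f n x / n}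

lemma Bset_measurable (hT : Measurable T) (hf : Measurable f) (q : ℝ) :
    MeasurableSet (Bset T f q) := by
  have : Bset T f q = ⋂ k : ℕ, ⋂ m : ℕ, ⋃ n : ℕ, ⋃ _h : m ≤ n,
      {x | q - 1 / (k + 1) < bS T f n x / n} := by
    ext x
    simp [Bset, exists_prop]
  rw [this]
  exact MeasurableSet.iInter fun k => MeasurableSet.iInter fun m =>
    MeasurableSet.iUnion fun n => MeasurableSet.iUnion fun _ =>
      measurableSet_lt measurable_const ((bS_measurable hT hf n).div_const _)

lemma bS_shift_bound {M : ℝ} (hM0 : 0 ≤ M) (hM : ∀ x, |f x| ≤ M) {n : ℕ} (hn : 1 ≤ n)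
    (x : α) : |bS T f n (T x) / n - bS T f (n + 1) x / (n + 1)| ≤ 2 * M / n := by
  have hn' : (0:ℝ) < n := by exact_mod_cast hn
  have hn1 : (0:ℝ) < (n:ℝ) + 1 := by linarith
  set u := bS T f n (T x) with hu
  have h1 : bS T f (n + 1) x = f x + u := bS_succ' n x
  have hub : |u| ≤ n * M := abs_bS_le hM n (T x)
  have hfb : |f x| ≤ M := hM x
  have key : u / n - (f x + u) / (n + 1) = (u - n * f x) / (n * (n + 1)) := by
    field_simp
    ring
  rw [h1]
  push_cast
  rw [key, abs_div, abs_of_pos (by positivity : (0:ℝ) < (n:ℝ) * ((n:ℝ) + 1))]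
  have hnum : |u - (n:ℝ) * f x| ≤ 2 * ((n:ℝ) * M) := by
    calc |u - (n:ℝ) * f x| ≤ |u| + |(n:ℝ) * f x| := abs_sub _ _
      _ ≤ n * M + n * M := by
          refine add_le_add hub ?_
          rw [abs_mul, abs_of_pos hn']
          exact mul_le_mul_of_nonneg_left hfb (le_of_lt hn')
      _ = 2 * ((n:ℝ) * M) := by ring
  calc |u - (n:ℝ) * f x| / ((n:ℝ) * ((n:ℝ) + 1)) ≤ 2 * ((n:ℝ) * M) / ((n:ℝ) * ((n:ℝ) + 1)) := by
        gcongr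
    _ ≤ 2 * M / n := by
        rw [div_le_div_iff₀ (by positivity) hn']
        nlinarith [mul_nonneg (le_of_lt hn') hM0]

lemma Bset_invariant {M : ℝ} (hM0 : 0 ≤ M) (hM : ∀ x, |f x| ≤ M) (q : ℝ) :
    T ⁻¹' (Bset T f q) = Bset T f q := by
  have half : ∀ k : ℕ, (1:ℝ)/(2*(k:ℝ)+2) + 1/(2*(k:ℝ)+2) = 1/((k:ℝ)+1) := by
    intro k
    have : (0:ℝ) < (k:ℝ) + 1 := by positivity
    field_simp
    ring
  have hcast : ∀ k : ℕ, ((2*k+1 : ℕ):ℝ) + 1 = 2*(k:ℝ)+2 := by intro k; push_cast; ring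
  have key : ∀ (k : ℕ) (n : ℕ), (⌈2*M*(2*(k:ℝ)+2)⌉₊ + 1 : ℕ) ≤ n →
      2*M/(n:ℝ) ≤ 1/(2*(k:ℝ)+2) := by
    intro k n hn
    have hn0 : (0:ℝ) < n := by
      have : 1 ≤ n := le_trans (by omega) hn
      exact_mod_cast this
    rw [div_le_div_iff₀ hn0 (by positivity)]
    have h1 : 2*M*(2*(k:ℝ)+2) ≤ ⌈2*M*(2*(k:ℝ)+2)⌉₊ := Nat.le_ceil _
    have h2 : ((⌈2*M*(2*(k:ℝ)+2)⌉₊ : ℕ):ℝ) + 1 ≤ n := by exact_mod_cast hn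
    linarith
  ext x
  simp only [mem_preimage, Bset, mem_setOf_eq]
  constructor
  · intro h k m
    obtain ⟨n, hn1, hn2⟩ := h (2*k+1) (max m (⌈2*M*(2*(k:ℝ)+2)⌉₊ + 1))
    have hnR : ⌈2*M*(2*(k:ℝ)+2)⌉₊ + 1 ≤ n := le_trans (le_max_right _ _) hn1
    have hnm : m ≤ n := le_trans (le_max_left _ _) hn1
    have hn1' : 1 ≤ n := le_trans (by omega) hnR
    refine ⟨n+1, by omega, ?_⟩
    have hb := (abs_le.mp (bS_shift_bound (T := T) hM0 hM hn1' x)).2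
    have h2M := key k n hnR
    rw [hcast] at hn2
    push_cast
    linarith [half k]
  · intro h k m
    obtain ⟨n', hn1, hn2⟩ := h (2*k+1) (max (m+1) (⌈2*M*(2*(k:ℝ)+2)⌉₊ + 2))
    have hnR : ⌈2*M*(2*(k:ℝ)+2)⌉₊ + 2 ≤ n' := le_trans (le_max_right _ _) hn1
    have hnm : m + 1 ≤ n' := le_trans (le_max_left _ _) hn1
    obtain ⟨n, rfl⟩ : ∃ n, n' = n + 1 := ⟨n' - 1, by omega⟩
    have hnR' : ⌈2*M*(2*(k:ℝ)+2)⌉₊ + 1 ≤ n := by omega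
    have hn1' : 1 ≤ n := by omega
    refine ⟨n, by omega, ?_⟩
    have hb := (abs_le.mp (bS_shift_bound (T := T) hM0 hM hn1' x)).1
    have h2M := key k n hnR'
    rw [hcast] at hn2
    push_cast at hn2 ⊢
    linarith [half k]

lemma ae_not_Bset {μ : Measure α} [IsProbabilityMeasure μ] (hT : Ergodic T μ)
    (hf : Measurable f) {M : ℝ} (hM0 : 0 ≤ M) (hM : ∀ x, |f x| ≤ M) {q : ℝ}
    (hq : ∫ y, f y ∂μ < q) : ∀ᵐ x ∂μ, x ∉ Bset T f q := by
  have hBm := Bset_measurable hT.measurable hf q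
  rcases hT.toPreErgodic.prob_eq_zero_or_one hBm (Bset_invariant (T := T) hM0 hM q) with h | h
  · rw [ae_iff]
    simpa using h
  · exfalso
    set q' := ((∫ y, f y ∂μ) + q) / 2 with hq'
    have hq'1 : ∫ y, f y ∂μ < q' := by rw [hq']; linarith
    have hq'2 : q' < q := by rw [hq']; linarith
    set g := fun y => f y - q' with hg
    have hgm : Measurable g := hf.sub measurable_const
    have hgM : ∀ y, |g y| ≤ M + |q'| := fun y =>
      (abs_sub (f y) q').trans (add_le_add (hM y) le_rfl)
    have hgM0 : 0 ≤ M + |q'| := add_nonneg hM0 (abs_nonneg _)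
    have hsub : Bset T f q ⊆ ⋃ n, {x | 0 < Ph T g n x} := by
      intro x hx
      obtain ⟨k, hk⟩ : ∃ k : ℕ, (1:ℝ) / ((k:ℝ) + 1) ≤ q - q' := by
        obtain ⟨k, hk⟩ := exists_nat_gt (1 / (q - q'))
        refine ⟨k, ?_⟩
        have hqq : (0:ℝ) < q - q' := by linarith
        rw [div_le_iff₀ (by positivity), ← div_le_iff₀' hqq]
        have : (0:ℝ) < (k:ℝ) + 1 := by positivity
        linarith
      obtain ⟨n, hn1, hn2⟩ := hx k 1
      have hn0 : (0:ℝ) < n := by exact_mod_cast hn1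
      have hbs : 0 < bS T g n x := by
        have he : bS T g n x = bS T f n x - n * q' := bS_sub_const (T := T) q' n x
        have h1 : q' < bS T f n x / n := by linarith
        rw [he]
        have := (lt_div_iff₀ hn0).mp h1
        linarith
      exact mem_iUnion.2 ⟨n, lt_of_lt_of_le hbs (bS_le_Ph le_rfl x)⟩
    set U := ⋃ n, {x | 0 < Ph T g n x} with hU
    have hUm : MeasurableSet U := MeasurableSet.iUnion fun n =>
      measurableSet_lt measurable_const (Ph_measurable hT.measurable hgm n)
    have hU1 : μ U = 1 := le_antisymm prob_le_one (h ▸ measure_mono hsub)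
    have h0 : 0 ≤ ∫ x in U, g x ∂μ :=
      maximal_iUnion hT.toMeasurePreserving hgm hgM0 hgM
    have hres : μ.restrict U = μ := by
      have : Uᶜ =ᵐ[μ] (∅ : Set α) := by
        refine ae_eq_empty.mpr ?_
        change μ (Uᶜ : Set α) = 0
        rw [measure_compl hUm (measure_ne_top μ U), hU1, measure_univ]
        simp
      have h2 : U =ᵐ[μ] (univ : Set α) := by
        rw [ae_eq_univ]
        replace this := ae_eq_empty.mp this
        exact this
      rw [Measure.restrict_congr_set h2, Measure.restrict_univ]
    rw [hres] at h0
    have hint : ∫ x, g x ∂μ = (∫ y, f y ∂μ) - q' := by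
      rw [hg]
      rw [integral_sub (integrable_of_bounded (μ := μ) hf hM) (integrable_const _)]
      simp
    rw [hint] at h0
    linarith

theorem birkhoff_ae {μ : Measure α} [IsProbabilityMeasure μ] (hT : Ergodic T μ)
    (hf : Measurable f) {M : ℝ} (hM : ∀ x, |f x| ≤ M) :
    ∀ᵐ x ∂μ, Tendsto (fun n : ℕ => bS T f n x / n) atTop (𝓝 (∫ y, f y ∂μ)) := by
  have hne : Nonempty α := by
    by_contra hne
    rw [not_nonempty_iff] at hne
    have h1 : μ univ = 1 := measure_univ
    rw [show (univ : Set α) = ∅ from eq_empty_of_isEmpty _, measure_empty] at h1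
    exact zero_ne_one h1
  have hM0 : 0 ≤ M := le_trans (abs_nonneg _) (hM (Classical.arbitrary α))
  have hup : ∀ᵐ x ∂μ, ∀ q : ℚ, (∫ y, f y ∂μ) < (q:ℝ) → x ∉ Bset T f q := by
    rw [ae_all_iff]
    intro q
    by_cases hq : (∫ y, f y ∂μ) < (q:ℝ)
    · exact (ae_not_Bset hT hf hM0 hM hq).mono fun x h _ => h
    · exact ae_of_all _ fun x h => absurd h hq
  have hfn : Measurable (fun y => - f y) := hf.neg
  have hMn : ∀ y, |(fun y => - f y) y| ≤ M := fun y => by simpa [abs_neg] using hM y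
  have hdn : ∀ᵐ x ∂μ, ∀ q : ℚ, (∫ y, (fun y => - f y) y ∂μ) < (q:ℝ) →
      x ∉ Bset T (fun y => - f y) q := by
    rw [ae_all_iff]
    intro q
    by_cases hq : (∫ y, (fun y => - f y) y ∂μ) < (q:ℝ)
    · exact (ae_not_Bset hT hfn hM0 hMn hq).mono fun x h _ => h
    · exact ae_of_all _ fun x h => absurd h hq
  filter_upwards [hup, hdn] with x h1 h2
  rw [tendsto_order]
  constructor
  · intro a ha
    obtain ⟨q, hq1, hq2⟩ := exists_rat_btwn (neg_lt_neg ha)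
    have hiq : (∫ y, (fun y => - f y) y ∂μ) < (q:ℝ) := by
      rw [integral_neg]
      exact hq1
    have h2q := h2 q hiq
    simp only [Bset, mem_setOf_eq, not_forall] at h2q
    push_neg at h2q
    obtain ⟨k, m, hkm⟩ := h2q
    rw [eventually_atTop]
    refine ⟨max m 1, fun n hn => ?_⟩
    have hnm : m ≤ n := le_trans (le_max_left _ _) hn
    have hn1 : 1 ≤ n := le_trans (le_max_right _ _) hn
    have hn0 : (0:ℝ) < n := by exact_mod_cast hn1
    have := hkm n hnm
    rw [bS_neg (T := T)] at this
    have hpos : (0:ℝ) < 1 / ((k:ℝ) + 1) := by positivity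
    have hq2' : a < -(q:ℝ) := by linarith [lt_neg.mp hq2]
    have : -(bS T f n x) / n ≤ (q:ℝ) - 1/((k:ℝ)+1) := this
    rw [neg_div] at this
    linarith
  · intro b hb
    obtain ⟨q, hq1, hq2⟩ := exists_rat_btwn hb
    have h1q := h1 q hq1
    simp only [Bset, mem_setOf_eq, not_forall] at h1q
    push_neg at h1q
    obtain ⟨k, m, hkm⟩ := h1q
    rw [eventually_atTop]
    refine ⟨m, fun n hn => ?_⟩
    have := hkm n hn
    have hpos : (0:ℝ) < 1 / ((k:ℝ) + 1) := by positivity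
    linarith


end Birk

variable {N : ℕ} {S : Sys N}

lemma sig_isClosed (S : Sys N) :
    IsClosed {ω : ℤ → Fin N | ∀ n : ℤ, S.A (ω n) (ω (n + 1)) = true} := by
  have heq : {ω : ℤ → Fin N | ∀ n : ℤ, S.A (ω n) (ω (n + 1)) = true} =
      ⋂ n : ℤ, {ω | S.A (ω n) (ω (n + 1)) = true} := by
    ext ω; simp [Set.mem_iInter]
  rw [heq]
  refine isClosed_iInter fun n => ?_
  have h1 : Continuous fun ω : ℤ → Fin N => (ω n, ω (n + 1)) :=
    (continuous_apply n).prodMk (continuous_apply (n + 1))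
  have h2 : Continuous fun p : Fin N × Fin N => S.A p.1 p.2 := continuous_of_discreteTopology
  exact IsClosed.preimage (h2.comp h1) (isClosed_singleton (x := true))

instance : CompactSpace (Sig S) :=
  isCompact_iff_compactSpace.mp (sig_isClosed S).isCompact

instance : SecondCountableTopology (Sig S) :=
  TopologicalSpace.Subtype.secondCountableTopology
    {ω : ℤ → Fin N | ∀ n : ℤ, S.A (ω n) (ω (n + 1)) = true}

instance : BorelSpace (Sig S) :=
  Subtype.borelSpace {ω : ℤ → Fin N | ∀ n : ℤ, S.A (ω n) (ω (n + 1)) = true}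

example : T2Space (Sig S) := inferInstance
example : LocallyCompactSpace (Sig S) := inferInstance
example : TopologicalSpace.SeparableSpace C(Sig S, ℝ) := inferInstance
example : BorelSpace (Sig S × ℝ) := inferInstance
/-- inverse shift -/
def shiftInv (S : Sys N) (ω : Sig S) : Sig S :=
  ⟨fun n => ω.1 (n - 1), fun n => by
    show S.A (ω.1 (n - 1)) (ω.1 (n + 1 - 1)) = true
    have e1 : n + 1 - 1 = n - 1 + 1 := by ring
    rw [e1]
    exact ω.2 (n - 1)⟩

lemma shift_shiftInv (S : Sys N) (ω : Sig S) : shift S (shiftInv S ω) = ω := by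
  apply Subtype.ext
  funext n
  show ω.1 (n + 1 - 1) = ω.1 n
  norm_num

lemma shiftInv_shift (S : Sys N) (ω : Sig S) : shiftInv S (shift S ω) = ω := by
  apply Subtype.ext
  funext n
  show ω.1 (n - 1 + 1) = ω.1 n
  norm_num

lemma continuous_shift (S : Sys N) : Continuous (shift S) := by
  apply Continuous.subtype_mk
  exact continuous_pi fun n => (continuous_apply (n + 1)).comp continuous_subtype_val

lemma continuous_shiftInv (S : Sys N) : Continuous (shiftInv S) := by
  apply Continuous.subtype_mk
  exact continuous_pi fun n => (continuous_apply (n - 1)).comp continuous_subtype_val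

lemma measurable_fiberMap (S : Sys N) : Measurable fun p : ℝ × Fin N => S.f p.2 p.1 := by
  apply measurable_from_prod_countable_left
  intro k
  exact S.f_meas k

lemma measurable_Fmap (S : Sys N) : Measurable (Fmap S) := by
  apply Measurable.prodMk
  · exact (continuous_shift S).measurable.comp measurable_fst
  · have hc : Continuous fun q : Sig S × ℝ => q.1.1 0 :=
      ((continuous_apply (0:ℤ)).comp continuous_subtype_val).comp continuous_fst
    have h1 : Measurable fun q : Sig S × ℝ => (q.2, (q.1.1 0 : Fin N)) :=
      measurable_snd.prodMk hc.measurable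
    exact (measurable_fiberMap S).comp h1

lemma Fmap_iterate_fst (S : Sys N) (q : Sig S × ℝ) (n : ℕ) :
    ((Fmap S)^[n] q).1 = (shift S)^[n] q.1 := by
  induction n generalizing q with
  | zero => rfl
  | succ n ih =>
    rw [Function.iterate_succ_apply, Function.iterate_succ_apply]
    rw [ih (Fmap S q)]
    rfl

lemma mem_strip_iff {φ₁ φ₂ : Sig S → ℝ} {q : Sig S × ℝ} :
    q ∈ Strip S φ₁ φ₂ ↔ φ₁ q.1 ≤ q.2 ∧ q.2 ≤ φ₂ q.1 := Iff.rfl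

lemma fiber_strip (φ₁ φ₂ : Sig S → ℝ) (ω : Sig S) :
    fiber (Strip S φ₁ φ₂) ω = Icc (φ₁ ω) (φ₂ ω) := by
  ext x; simp [fiber, Strip, mem_Icc]

/-- continuity of the pushed-forward boundary -/
lemma continuous_push {u : Sig S → ℝ} (hu : Continuous u) (huI : ∀ ω, u ω ∈ Icc (0:ℝ) 1) :
    Continuous fun ω : Sig S => S.f (ω.1 (-1)) (u (shiftInv S ω)) := by
  have hG : ContinuousOn (fun p : Fin N × ℝ => S.f p.1 p.2) (univ ×ˢ Icc (0:ℝ) 1) := by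
    intro z hz
    have hopen : {p : Fin N × ℝ | p.1 = z.1} ∈ 𝓝 z := by
      have : IsOpen {p : Fin N × ℝ | p.1 = z.1} :=
        (isOpen_discrete {z.1}).preimage continuous_fst
      exact this.mem_nhds rfl
    have hev : (fun p : Fin N × ℝ => S.f p.1 p.2) =ᶠ[𝓝[univ ×ˢ Icc (0:ℝ) 1] z]
        (fun p : Fin N × ℝ => S.f z.1 p.2) := by
      filter_upwards [nhdsWithin_le_nhds hopen] with p hp
      rw [hp]
    apply ContinuousWithinAt.congr_of_eventuallyEq _ hev rfl
    have hz2 : z.2 ∈ Icc (0:ℝ) 1 := hz.2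
    have hf : ContinuousWithinAt (S.f z.1) (Icc (0:ℝ) 1) z.2 :=
      ((S.f_contDiff z.1).continuousOn) z.2 hz2
    apply ContinuousWithinAt.comp (t := Icc (0:ℝ)  1) hf
      (continuous_snd.continuousWithinAt)
    intro p hp
    exact hp.2
  have hp : Continuous fun ω : Sig S => ((ω.1 (-1) : Fin N), u (shiftInv S ω)) :=
    (((continuous_apply (-1 : ℤ)).comp continuous_subtype_val)).prodMk
      (hu.comp (continuous_shiftInv S))
  exact hG.comp_continuous hp fun ω => ⟨mem_univ _, huI _⟩

lemma push_mem_Icc {u : Sig S → ℝ} (huI : ∀ ω, u ω ∈ Icc (0:ℝ) 1) (ω : Sig S) :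
    S.f (ω.1 (-1)) (u (shiftInv S ω)) ∈ Icc (0:ℝ) 1 :=
  ⟨(S.f_into _ (huI _)).1.le, (S.f_into _ (huI _)).2.le⟩

/-- image of a strip under `F` -/
lemma image_strip {u v : Sig S → ℝ} (hu : Continuous u) (hv : Continuous v)
    (huI : ∀ ω, u ω ∈ Icc (0:ℝ) 1) (hvI : ∀ ω, v ω ∈ Icc (0:ℝ) 1) (huv : ∀ ω, u ω ≤ v ω) :
    Fmap S '' Strip S u v =
      Strip S (fun ω => S.f (ω.1 (-1)) (u (shiftInv S ω)))
             (fun ω => S.f (ω.1 (-1)) (v (shiftInv S ω))) := by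
  ext ⟨ω, y⟩
  constructor
  · rintro ⟨⟨ω₀, x₀⟩, ⟨h1, h2⟩, heq⟩
    rw [← heq]
    have hx₀ : x₀ ∈ Icc (0:ℝ) 1 :=
      ⟨le_trans (huI ω₀).1 h1, le_trans h2 (hvI ω₀).2⟩
    have hωinv : shiftInv S (shift S ω₀) = ω₀ := shiftInv_shift S ω₀
    have hsym : (shift S ω₀).1 (-1) = ω₀.1 0 := by
      show ω₀.1 (-1 + 1) = ω₀.1 0
      norm_num
    constructor
    · show S.f ((shift S ω₀).1 (-1)) (u (shiftInv S (shift S ω₀))) ≤ S.f (ω₀.1 0) x₀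
      rw [hωinv, hsym]
      exact (S.f_mono _).monotoneOn (huI ω₀) hx₀ h1
    · show S.f (ω₀.1 0) x₀ ≤ S.f ((shift S ω₀).1 (-1)) (v (shiftInv S (shift S ω₀)))
      rw [hωinv, hsym]
      exact (S.f_mono _).monotoneOn hx₀ (hvI ω₀) h2
  · rintro ⟨h1, h2⟩
    set ω₀ := shiftInv S ω with hω₀
    set k := ω.1 (-1) with hk
    have hω₀0 : ω₀.1 0 = k := by
      show ω.1 (0 - 1) = ω.1 (-1)
      norm_num
    have hcont : ContinuousOn (S.f k) (Icc (u ω₀) (v ω₀)) :=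
      (S.f_contDiff k).continuousOn.mono (Icc_subset_Icc (huI ω₀).1 (hvI ω₀).2)
    have hivt : Icc (S.f k (u ω₀)) (S.f k (v ω₀)) ⊆ S.f k '' Icc (u ω₀) (v ω₀) :=
      intermediate_value_Icc (huv ω₀) hcont
    obtain ⟨x, hx, hfx⟩ := hivt ⟨h1, h2⟩
    refine ⟨(ω₀, x), ⟨hx.1, hx.2⟩, ?_⟩
    show (shift S ω₀, S.f (ω₀.1 0) x) = (ω, y)
    rw [shift_shiftInv S ω, hω₀0, hfx]

/-- the pushed boundary pair -/
def push (S : Sys N) (p : (Sig S → ℝ) × (Sig S → ℝ)) : (Sig S → ℝ) × (Sig S → ℝ) :=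
  (fun ω => S.f (ω.1 (-1)) (p.1 (shiftInv S ω)), fun ω => S.f (ω.1 (-1)) (p.2 (shiftInv S ω)))

def Good (S : Sys N) (p : (Sig S → ℝ) × (Sig S → ℝ)) : Prop :=
  Continuous p.1 ∧ Continuous p.2 ∧ (∀ ω, p.1 ω ∈ Icc (0:ℝ) 1) ∧
    (∀ ω, p.2 ω ∈ Icc (0:ℝ) 1) ∧ (∀ ω, p.1 ω ≤ p.2 ω)

lemma good_push {p : (Sig S → ℝ) × (Sig S → ℝ)} (hp : Good S p) : Good S (push S p) := by
  obtain ⟨h1, h2, h3, h4, h5⟩ := hp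
  refine ⟨continuous_push h1 h3, continuous_push h2 h4,
    fun ω => push_mem_Icc h3 ω, fun ω => push_mem_Icc h4 ω, fun ω => ?_⟩
  exact (S.f_mono _).monotoneOn (h3 _) (h4 _) (h5 _)

lemma image_strip_push {p : (Sig S → ℝ) × (Sig S → ℝ)} (hp : Good S p) :
    Fmap S '' Strip S p.1 p.2 = Strip S (push S p).1 (push S p).2 :=
  image_strip hp.1 hp.2.1 hp.2.2.1 hp.2.2.2.1 hp.2.2.2.2

/-- the sequence of boundaries of `F^[n] '' T` -/
noncomputable def bdry (S : Sys N) (φ₁ φ₂ : Sig S → ℝ) : ℕ → (Sig S → ℝ) × (Sig S → ℝ) :=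
  fun n => Nat.rec (φ₁, φ₂) (fun _ p => push S p) n

lemma bdry_zero (S : Sys N) (φ₁ φ₂ : Sig S → ℝ) : bdry S φ₁ φ₂ 0 = (φ₁, φ₂) := rfl

lemma bdry_succ (S : Sys N) (φ₁ φ₂ : Sig S → ℝ) (n : ℕ) :
    bdry S φ₁ φ₂ (n + 1) = push S (bdry S φ₁ φ₂ n) := rfl

lemma good_bdry {φ₁ φ₂ : Sig S → ℝ} (h : Good S (φ₁, φ₂)) (n : ℕ) :
    Good S (bdry S φ₁ φ₂ n) := by
  induction n with
  | zero => exact h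
  | succ n ih => rw [bdry_succ]; exact good_push ih

lemma image_strip_bdry {φ₁ φ₂ : Sig S → ℝ} (h : Good S (φ₁, φ₂)) (n : ℕ) :
    (Fmap S)^[n] '' Strip S φ₁ φ₂ =
      Strip S (bdry S φ₁ φ₂ n).1 (bdry S φ₁ φ₂ n).2 := by
  induction n with
  | zero => simp [bdry_zero]
  | succ n ih =>
    rw [Function.iterate_succ', Set.image_comp, ih, bdry_succ]
    exact image_strip_push (good_bdry h n)

lemma iterate_image_anti {T : Set (Sig S × ℝ)} (hFT : Fmap S '' T ⊆ T) :
    Antitone fun n : ℕ => (Fmap S)^[n] '' T := by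
  apply antitone_nat_of_succ_le
  intro n
  calc (Fmap S)^[n + 1] '' T = (Fmap S)^[n] '' (Fmap S '' T) := by
        rw [Function.iterate_succ, Set.image_comp]
    _ ⊆ (Fmap S)^[n] '' T := Set.image_mono hFT

lemma Fmap_image_Amax {T : Set (Sig S × ℝ)} (hFT : Fmap S '' T ⊆ T) :
    Fmap S '' Amax S T ⊆ Amax S T := by
  intro z hz
  rw [Amax, mem_iInter]
  intro n
  have h1 : Fmap S '' Amax S T ⊆ Fmap S '' ((Fmap S)^[n] '' T) :=
    Set.image_mono (iInter_subset _ n)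
  have h2 : Fmap S '' ((Fmap S)^[n] '' T) = (Fmap S)^[n + 1] '' T := by
    rw [Function.iterate_succ', Set.image_comp]
  have h3 : z ∈ (Fmap S)^[n + 1] '' T := by
    rw [← h2]
    exact h1 hz
  exact iterate_image_anti hFT (Nat.le_succ n) h3

lemma fiber_iInter {B : ℕ → Set (Sig S × ℝ)} (ω : Sig S) :
    fiber (⋂ n, B n) ω = ⋂ n, fiber (B n) ω := by
  ext x; simp [fiber, mem_iInter]

/-- sup-norm bound for g on the compact core -/
lemma exists_gbound (g : C(Sig S × ℝ, ℝ)) :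
    ∃ M : ℝ, 0 ≤ M ∧ ∀ (ω : Sig S) (x : ℝ), x ∈ Icc (0:ℝ) 1 → |g (ω, x)| ≤ M := by
  obtain ⟨C, hC⟩ := (isCompact_univ.prod isCompact_Icc).exists_bound_of_continuousOn
    (f := g) g.continuous.continuousOn
  refine ⟨max C 0, le_max_right _ _, fun ω x hx => ?_⟩
  have := hC (ω, x) ⟨mem_univ _, hx⟩
  rw [Real.norm_eq_abs] at this
  exact this.trans (le_max_left _ _)

/-- uniform modulus of continuity in the fiber variable -/
lemma exists_modulus (g : C(Sig S × ℝ, ℝ)) {ε : ℝ} (hε : 0 < ε) :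
    ∃ δ > (0:ℝ), ∀ (ω : Sig S) (x y : ℝ), x ∈ Icc (0:ℝ) 1 → y ∈ Icc (0:ℝ) 1 →
      |x - y| < δ → |g (ω, x) - g (ω, y)| < ε := by
  set C : Set (Sig S × ℝ × ℝ) := {z | z.2.1 ∈ Icc (0:ℝ) 1 ∧ z.2.2 ∈ Icc (0:ℝ) 1 ∧
    ε ≤ |g (z.1, z.2.1) - g (z.1, z.2.2)|} with hCdef
  have hc1 : Continuous fun z : Sig S × ℝ × ℝ => g (z.1, z.2.1) :=
    g.continuous.comp (continuous_fst.prodMk (continuous_fst.comp continuous_snd))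
  have hc2 : Continuous fun z : Sig S × ℝ × ℝ => g (z.1, z.2.2) :=
    g.continuous.comp (continuous_fst.prodMk (continuous_snd.comp continuous_snd))
  have hgc : Continuous fun z : Sig S × ℝ × ℝ => |g (z.1, z.2.1) - g (z.1, z.2.2)| :=
    (hc1.sub hc2).abs
  have hCclosed : IsClosed C := by
    refine IsClosed.inter (isClosed_Icc.preimage (continuous_fst.comp continuous_snd))
      (IsClosed.inter (isClosed_Icc.preimage (continuous_snd.comp continuous_snd)) ?_)
    exact isClosed_le continuous_const hgc
  have hCcomp : IsCompact C := by
    apply IsCompact.of_isClosed_subset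
      (isCompact_univ.prod (isCompact_Icc.prod isCompact_Icc)) hCclosed
    exact fun z hz => ⟨mem_univ _, hz.1, hz.2.1⟩
  rcases eq_empty_or_nonempty C with hCe | hCne
  · refine ⟨1, one_pos, fun ω x y hx hy _ => ?_⟩
    by_contra hcon
    push_neg at hcon
    exact absurd (show (ω, x, y) ∈ C from ⟨hx, hy, hcon⟩) (by rw [hCe]; exact notMem_empty _)
  · obtain ⟨z₀, hz₀, hmin⟩ := hCcomp.exists_isMinOn hCne
      ((continuous_fst.comp continuous_snd).sub
        (continuous_snd.comp continuous_snd)).abs.continuousOn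
    set δ := |z₀.2.1 - z₀.2.2| with hδdef
    have hδ : 0 < δ := by
      rcases lt_or_eq_of_le (abs_nonneg (z₀.2.1 - z₀.2.2)) with h | h
      · exact h
      · exfalso
        have : z₀.2.1 = z₀.2.2 := by
          have := h.symm
          rw [abs_eq_zero] at this
          linarith [sub_eq_zero.mp this]
        have h3 := hz₀.2.2
        rw [this] at h3
        simp at h3
        linarith
    refine ⟨δ, hδ, fun ω x y hx hy hxy => ?_⟩
    by_contra hcon
    push_neg at hcon
    have hmem : (ω, x, y) ∈ C := ⟨hx, hy, hcon⟩
    have h5 := isMinOn_iff.mp hmin (ω, x, y) hmem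
    simp only [Pi.sub_apply, Function.comp_apply] at h5
    rw [← hδdef] at h5
    exact absurd hxy (not_lt.mpr h5)

lemma cm_integrable (S : Sys N) (ν : Measure (Sig S)) [IsProbabilityMeasure ν]
    (h : C(Sig S, ℝ)) : Integrable (fun ω => h ω) ν :=
  Birk.integrable_of_bounded (μ := ν) h.continuous.measurable
    (C := ‖h‖) (fun ω => by rw [← Real.norm_eq_abs]; exact h.norm_coe_le_norm ω)

/-- a.e. every point is Birkhoff generic (pointwise ergodic theorem + separability) -/
lemma ae_birkhoffGeneric (S : Sys N) (ν : Measure (Sig S)) [IsProbabilityMeasure ν]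
    (hνerg : Ergodic (shift S) ν) : ∀ᵐ ω ∂ν, BirkhoffGeneric S ν ω := by
  obtain ⟨D, hDc, hDd⟩ := TopologicalSpace.exists_countable_dense C(Sig S, ℝ)
  have hae : ∀ᵐ ω ∂ν, ∀ h ∈ D, Tendsto
      (fun n : ℕ => (∑ i ∈ Finset.range n, h ((shift S)^[i] ω)) / n) atTop
      (𝓝 (∫ ω', h ω' ∂ν)) := by
    rw [ae_ball_iff hDc]
    intro h _
    have hb := Birk.birkhoff_ae hνerg h.continuous.measurable (M := ‖h‖)
      (fun ω => by rw [← Real.norm_eq_abs]; exact h.norm_coe_le_norm ω)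
    simpa [Birk.bS] using hb
  filter_upwards [hae] with ω hω
  intro g
  rw [Metric.tendsto_atTop]
  intro ε hε
  obtain ⟨h, hh, hhD⟩ := Metric.dense_iff.mp hDd g (ε/4) (by positivity)
  have hdist : dist g h < ε/4 := by
    rw [dist_comm]
    exact Metric.mem_ball.mp hh
  have happ : ∀ z : Sig S, |g z - h z| ≤ dist g h := fun z => by
    rw [← Real.dist_eq]
    exact ContinuousMap.dist_apply_le_dist z
  have hten := hω h hhD
  rw [Metric.tendsto_atTop] at hten
  obtain ⟨n₁, hn₁⟩ := hten (ε/4) (by positivity)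
  refine ⟨max n₁ 1, fun n hn => ?_⟩
  have hnn1 : n₁ ≤ n := le_trans (le_max_left _ _) hn
  have hn1 : 1 ≤ n := le_trans (le_max_right _ _) hn
  have hn0 : (0:ℝ) < n := by exact_mod_cast hn1
  have havg : |(∑ i ∈ Finset.range n, g ((shift S)^[i] ω)) / n -
      (∑ i ∈ Finset.range n, h ((shift S)^[i] ω)) / n| ≤ dist g h := by
    rw [div_sub_div_same, ← Finset.sum_sub_distrib, abs_div,
      abs_of_pos hn0, div_le_iff₀ hn0]
    calc |∑ i ∈ Finset.range n, (g ((shift S)^[i] ω) - h ((shift S)^[i] ω))|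
        ≤ ∑ i ∈ Finset.range n, |g ((shift S)^[i] ω) - h ((shift S)^[i] ω)| :=
          Finset.abs_sum_le_sum_abs _ _
      _ ≤ ∑ _i ∈ Finset.range n, dist g h := Finset.sum_le_sum fun i _ => happ _
      _ = n * dist g h := by simp [mul_comm]
      _ ≤ dist g h * n := by ring_nf; exact le_rfl
  have hint : |(∫ ω', h ω' ∂ν) - ∫ ω', g ω' ∂ν| ≤ dist g h := by
    rw [← integral_sub (cm_integrable S ν h) (cm_integrable S ν g)]
    calc |∫ ω', (h ω' - g ω') ∂ν| ≤ ∫ ω', |h ω' - g ω'| ∂ν := by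
          rw [← Real.norm_eq_abs]
          exact (norm_integral_le_integral_norm _).trans (le_of_eq (by simp [Real.norm_eq_abs]))
      _ ≤ ∫ _ω', dist g h ∂ν := by
          apply integral_mono ((cm_integrable S ν h).sub (cm_integrable S ν g)).abs
            (integrable_const _)
          intro z
          simp only [Pi.sub_apply]
          rw [abs_sub_comm]
          exact happ z
      _ = dist g h := by simp
  have h2 := hn₁ n hnn1
  rw [Real.dist_eq] at h2 ⊢
  calc |(∑ i ∈ Finset.range n, g ((shift S)^[i] ω)) / n - ∫ ω', g ω' ∂ν|
      ≤ |(∑ i ∈ Finset.range n, g ((shift S)^[i] ω)) / n -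
          (∑ i ∈ Finset.range n, h ((shift S)^[i] ω)) / n| +
        |(∑ i ∈ Finset.range n, h ((shift S)^[i] ω)) / n - ∫ ω', h ω' ∂ν| +
        |(∫ ω', h ω' ∂ν) - ∫ ω', g ω' ∂ν| := by
        have := abs_sub_le ((∑ i ∈ Finset.range n, g ((shift S)^[i] ω)) / (n:ℝ))
          ((∑ i ∈ Finset.range n, h ((shift S)^[i] ω)) / (n:ℝ)) (∫ ω', g ω' ∂ν)
        have h4 := abs_sub_le ((∑ i ∈ Finset.range n, h ((shift S)^[i] ω)) / (n:ℝ))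
          (∫ ω', h ω' ∂ν) (∫ ω', g ω' ∂ν)
        linarith
    _ < ε/4 + ε/4 + ε/4 := by
        apply add_lt_add (add_lt_add_of_le_of_lt (lt_of_le_of_lt havg hdist).le h2)
        exact lt_of_le_of_lt hint hdist
    _ < ε := by linarith

/-- Part 2 core: every point of the strip with Birkhoff-generic base is in the basin. -/
lemma basin_of_generic (S : Sys N) (ν : Measure (Sig S)) [IsProbabilityMeasure ν]
    {T : Set (Sig S × ℝ)} (hT : IsTrappingStrip S T)
    {φ : Sig S → ℝ} (hφ : Measurable φ)
    (hgraph : ∀ᵐ ω ∂ν, fiber (Amax S T) ω = {φ ω}) :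
    ∀ q ∈ T, BirkhoffGeneric S ν q.1 → q ∈ Basin S (ν.map fun ω => (ω, φ ω)) := by
  obtain ⟨⟨φ₁, φ₂, hc1, hc2, hI1, hI2, hlt, hTeq⟩, htrap⟩ := hT
  subst hTeq
  have hFT : Fmap S '' Strip S φ₁ φ₂ ⊆ Strip S φ₁ φ₂ := htrap.trans interior_subset
  set a : ℕ → Sig S → ℝ := fun n => (bdry S φ₁ φ₂ n).1 with ha
  set b : ℕ → Sig S → ℝ := fun n => (bdry S φ₁ φ₂ n).2 with hb
  have hgood : ∀ n, Good S (bdry S φ₁ φ₂ n) :=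
    good_bdry ⟨hc1, hc2, hI1, hI2, fun ω => (hlt ω).le⟩
  have himg : ∀ n, (Fmap S)^[n] '' Strip S φ₁ φ₂ = Strip S (a n) (b n) :=
    image_strip_bdry ⟨hc1, hc2, hI1, hI2, fun ω => (hlt ω).le⟩
  have hfib : ∀ ω, fiber (Amax S (Strip S φ₁ φ₂)) ω = ⋂ n, Icc (a n ω) (b n ω) := by
    intro ω
    rw [Amax, fiber_iInter]
    refine iInter_congr fun n => ?_
    rw [himg n, fiber_strip]
  have hanti := iterate_image_anti (S := S) hFT
  have hstep : ∀ n ω, a n ω ≤ a (n+1) ω ∧ b (n+1) ω ≤ b n ω := by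
    intro n ω
    have hsub : Strip S (a (n+1)) (b (n+1)) ⊆ Strip S (a n) (b n) := by
      rw [← himg n, ← himg (n+1)]
      exact hanti (Nat.le_succ n)
    have h1 : (ω, a (n+1) ω) ∈ Strip S (a (n+1)) (b (n+1)) :=
      ⟨le_rfl, (hgood (n+1)).2.2.2.2 ω⟩
    have h2 : (ω, b (n+1) ω) ∈ Strip S (a (n+1)) (b (n+1)) :=
      ⟨(hgood (n+1)).2.2.2.2 ω, le_rfl⟩
    exact ⟨(hsub h1).1, (hsub h2).2⟩
  have hamono : ∀ ω, Monotone fun n => a n ω :=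
    fun ω => monotone_nat_of_le_succ fun n => (hstep n ω).1
  have hbanti : ∀ ω, Antitone fun n => b n ω :=
    fun ω => antitone_nat_of_succ_le fun n => (hstep n ω).2
  have hcross : ∀ ω (n m : ℕ), a n ω ≤ b m ω := by
    intro ω n m
    rcases le_total n m with h | h
    · exact (hamono ω h).trans ((hgood m).2.2.2.2 ω)
    · exact ((hgood n).2.2.2.2 ω).trans (hbanti ω h)
  have hae : ∀ᵐ ω ∂ν, (∀ n, φ ω ∈ Icc (a n ω) (b n ω)) ∧
      Tendsto (fun n => b n ω - a n ω) atTop (𝓝 0) := by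
    refine hgraph.mono fun ω hfibω => ?_
    have hiff : ⋂ n, Icc (a n ω) (b n ω) = {φ ω} := by rw [← hfib ω]; exact hfibω
    have hmem : ∀ n, φ ω ∈ Icc (a n ω) (b n ω) := by
      intro n
      have : φ ω ∈ ⋂ n, Icc (a n ω) (b n ω) := by rw [hiff]; exact rfl
      exact mem_iInter.mp this n
    refine ⟨hmem, ?_⟩
    have hbddA : BddAbove (range fun n => a n ω) := ⟨b 0 ω, by
      rintro x ⟨n, rfl⟩
      exact hcross ω n 0⟩
    have hbddB : BddBelow (range fun n => b n ω) := ⟨a 0 ω, by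
      rintro x ⟨n, rfl⟩
      exact hcross ω 0 n⟩
    have hA := tendsto_atTop_ciSup (hamono ω) hbddA
    have hB := tendsto_atTop_ciInf (hbanti ω) hbddB
    have hAmem : (⨆ n, a n ω) ∈ ⋂ n, Icc (a n ω) (b n ω) := by
      rw [mem_iInter]
      intro m
      exact ⟨le_ciSup hbddA m, ciSup_le fun n => hcross ω n m⟩
    have hBmem : (⨅ n, b n ω) ∈ ⋂ n, Icc (a n ω) (b n ω) := by
      rw [mem_iInter]
      intro m
      exact ⟨le_ciInf fun n => hcross ω m n, ciInf_le hbddB m⟩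
    rw [hiff, mem_singleton_iff] at hAmem hBmem
    have := hB.sub hA
    rw [hAmem, hBmem, sub_self] at this
    exact this
  intro q hqT hgen g
  have he : Measurable fun ω : Sig S => (ω, φ ω) := measurable_id.prodMk hφ
  have hintmap : ∫ q', g q' ∂(ν.map fun ω => (ω, φ ω)) = ∫ ω, g (ω, φ ω) ∂ν :=
    integral_map he.aemeasurable g.continuous.aestronglyMeasurable
  rw [hintmap]
  set L := ∫ ω, g (ω, φ ω) ∂ν with hL
  obtain ⟨M, hM0, hMb⟩ := exists_gbound g
  rw [Metric.tendsto_atTop]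
  intro ε' hε'
  set ε := ε' / (6 * M + 8) with hεdef
  have hε : 0 < ε := by
    rw [hεdef]
    positivity
  obtain ⟨δ, hδ, hmod⟩ := exists_modulus g hε
  set χ : ℝ → ℝ := fun t => min 1 (max 0 ((t - δ/2) * (2/δ))) with hχdef
  have hχc : Continuous χ :=
    continuous_const.min (continuous_const.max ((continuous_id.sub continuous_const).mul
      continuous_const))
  have hχ0 : χ 0 = 0 := by
    rw [hχdef]
    show min 1 (max 0 ((0 - δ/2) * (2/δ))) = 0
    have h9 : (0 - δ/2) * (2/δ) = -1 := by
      field_simp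
      ring
    rw [h9]
    norm_num
  have hχ01 : ∀ t, 0 ≤ χ t ∧ χ t ≤ 1 := fun t =>
    ⟨le_min zero_le_one (le_max_left 0 _), min_le_left _ _⟩
  have hχ1 : ∀ t, δ ≤ t → χ t = 1 := by
    intro t ht
    rw [hχdef]
    have h1 : (1:ℝ) ≤ (t - δ/2) * (2/δ) := by
      have h2 : δ/2 ≤ t - δ/2 := by linarith
      have h3 : (δ/2) * (2/δ) = 1 := by
        field_simp
      calc (1:ℝ) = (δ/2) * (2/δ) := h3.symm
        _ ≤ (t - δ/2) * (2/δ) := mul_le_mul_of_nonneg_right h2 (by positivity)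
    simp only [min_eq_left_iff]
    exact le_max_of_le_right h1
  -- the two continuous families
  set Hcm : ℕ → C(Sig S, ℝ) := fun n =>
    ⟨fun ω => χ (b n ω - a n ω), hχc.comp (((hgood n).2.1).sub ((hgood n).1))⟩ with hHcm
  set Gcm : ℕ → C(Sig S, ℝ) := fun n =>
    ⟨fun ω => g (ω, a n ω), g.continuous.comp (continuous_id.prodMk ((hgood n).1))⟩ with hGcm
  -- dominated convergence for the widths
  have hHlim : Tendsto (fun n => ∫ ω, Hcm n ω ∂ν) atTop (𝓝 0) := by
    have h0 : (0:ℝ) = ∫ _ω, (0:ℝ) ∂ν := by simp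
    rw [h0]
    apply tendsto_integral_of_dominated_convergence (bound := fun _ => (1:ℝ))
    · exact fun n => (Hcm n).continuous.measurable.aestronglyMeasurable
    · exact integrable_const 1
    · intro n
      refine ae_of_all _ fun ω => ?_
      show ‖χ (b n ω - a n ω)‖ ≤ 1
      rw [Real.norm_eq_abs, abs_of_nonneg (hχ01 _).1]
      exact (hχ01 _).2
    · refine hae.mono fun ω hω => ?_
      have := (hχc.tendsto 0).comp hω.2
      rw [hχ0] at this
      exact this
  -- choose n₀
  have hev : ∀ᶠ n in atTop, |∫ ω, Hcm n ω ∂ν| < ε := by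
    have := Metric.tendsto_atTop.mp hHlim ε hε
    obtain ⟨n₂, hn₂⟩ := this
    rw [eventually_atTop]
    exact ⟨n₂, fun n hn => by simpa [Real.dist_eq] using hn₂ n hn⟩
  obtain ⟨n₀, hn₀⟩ := hev.exists
  have hHn₀ : ∫ ω, Hcm n₀ ω ∂ν < ε := lt_of_abs_lt hn₀
  have hH0 : 0 ≤ ∫ ω, Hcm n₀ ω ∂ν :=
    integral_nonneg fun ω => (hχ01 _).1
  -- pointwise comparison of Gcm n₀ with the graph function
  have hφI : ∀ᵐ ω ∂ν, φ ω ∈ Icc (0:ℝ) 1 := hae.mono fun ω hω =>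
    ⟨((hgood n₀).2.2.1 ω).1.trans (hω.1 n₀).1, (hω.1 n₀).2.trans ((hgood n₀).2.2.2.1 ω).2⟩
  have hcomp : ∀ (ω' : Sig S) (x : ℝ), x ∈ Icc (a n₀ ω') (b n₀ ω') →
      |g (ω', x) - Gcm n₀ ω'| ≤ ε + 2 * M * Hcm n₀ ω' := by
    intro ω' x hx
    have haI : a n₀ ω' ∈ Icc (0:ℝ) 1 := (hgood n₀).2.2.1 ω'
    have hbI : b n₀ ω' ∈ Icc (0:ℝ) 1 := (hgood n₀).2.2.2.1 ω'
    have hxI : x ∈ Icc (0:ℝ) 1 := ⟨haI.1.trans hx.1, hx.2.trans hbI.2⟩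
    have hH0' : 0 ≤ Hcm n₀ ω' := (hχ01 _).1
    rcases lt_or_ge (b n₀ ω' - a n₀ ω') δ with hcase | hcase
    · have hdist : |x - a n₀ ω'| < δ := by
        rw [abs_of_nonneg (by linarith [hx.1])]
        linarith [hx.2]
      have := hmod ω' x (a n₀ ω') hxI haI hdist
      have h2 : (0:ℝ) ≤ 2 * M * Hcm n₀ ω' := by positivity
      calc |g (ω', x) - Gcm n₀ ω'| = |g (ω', x) - g (ω', a n₀ ω')| := rfl
        _ ≤ ε + 2 * M * Hcm n₀ ω' := by linarith
    · have hHeq : Hcm n₀ ω' = 1 := hχ1 _ hcase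
      calc |g (ω', x) - Gcm n₀ ω'| = |g (ω', x) - g (ω', a n₀ ω')| := rfl
        _ ≤ |g (ω', x)| + |g (ω', a n₀ ω')| := abs_sub _ _
        _ ≤ M + M := add_le_add (hMb ω' x hxI) (hMb ω' _ haI)
        _ = 2 * M * Hcm n₀ ω' := by rw [hHeq]; ring
        _ ≤ ε + 2 * M * Hcm n₀ ω' := by linarith
  -- integral comparison
  have hGint : Integrable (fun ω => Gcm n₀ ω) ν := cm_integrable S ν (Gcm n₀)
  have hgraphint : Integrable (fun ω => g (ω, φ ω)) ν :=
    (integrable_const M).mono' (g.continuous.measurable.comp he).aestronglyMeasurable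
      (hφI.mono fun ω hω => by rw [Real.norm_eq_abs]; exact hMb ω (φ ω) hω)
  have hGL : |(∫ ω, Gcm n₀ ω ∂ν) - L| ≤ ε + 2 * M * ∫ ω, Hcm n₀ ω ∂ν := by
    rw [hL, ← integral_sub hGint hgraphint]
    have hb2 : ∀ᵐ ω ∂ν, ‖Gcm n₀ ω - g (ω, φ ω)‖ ≤ ε + 2 * M * Hcm n₀ ω := by
      filter_upwards [hae] with ω hω
      rw [Real.norm_eq_abs, abs_sub_comm]
      exact hcomp ω (φ ω) (hω.1 n₀)
    have hbint : Integrable (fun ω => ε + 2 * M * Hcm n₀ ω) ν :=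
      (integrable_const ε).add ((cm_integrable S ν (Hcm n₀)).const_mul _)
    have := norm_integral_le_of_norm_le hbint hb2
    rw [Real.norm_eq_abs] at this
    calc |∫ ω, (Gcm n₀ ω - g (ω, φ ω)) ∂ν| ≤ ∫ ω, (ε + 2 * M * Hcm n₀ ω) ∂ν := this
      _ = ε + 2 * M * ∫ ω, Hcm n₀ ω ∂ν := by
          rw [integral_add (integrable_const ε) ((cm_integrable S ν (Hcm n₀)).const_mul _),
            integral_const_mul]
          simp
  -- orbit facts
  have hbase : ∀ i : ℕ, ((Fmap S)^[i] q).1 = (shift S)^[i] q.1 := Fmap_iterate_fst S q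
  have horbit : ∀ i : ℕ, (Fmap S)^[i] q ∈ Strip S (a i) (b i) := by
    intro i
    rw [← himg i]
    exact ⟨q, hqT, rfl⟩
  have horbit₀ : ∀ i : ℕ, n₀ ≤ i → (Fmap S)^[i] q ∈ Strip S (a n₀) (b n₀) := by
    intro i hi
    rw [← himg n₀]
    exact hanti hi ⟨q, hqT, rfl⟩
  have hterm : ∀ i : ℕ, n₀ ≤ i →
      |g ((Fmap S)^[i] q) - Gcm n₀ ((shift S)^[i] q.1)| ≤
        ε + 2 * M * Hcm n₀ ((shift S)^[i] q.1) := by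
    intro i hi
    have hmem := horbit₀ i hi
    have heq : (Fmap S)^[i] q = ((shift S)^[i] q.1, ((Fmap S)^[i] q).2) := by
      rw [← hbase i]
    rw [heq]
    apply hcomp
    have h1 := hmem.1
    have h2 := hmem.2
    rw [hbase i] at h1 h2
    exact ⟨h1, h2⟩
  have htermcrude : ∀ i : ℕ,
      |g ((Fmap S)^[i] q) - Gcm n₀ ((shift S)^[i] q.1)| ≤ 2 * M := by
    intro i
    have hmem := horbit i
    have hxI : ((Fmap S)^[i] q).2 ∈ Icc (0:ℝ) 1 :=
      ⟨((hgood i).2.2.1 _).1.trans hmem.1, hmem.2.trans (((hgood i).2.2.2.1) _).2⟩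
    have heq : (Fmap S)^[i] q = ((shift S)^[i] q.1, ((Fmap S)^[i] q).2) := by
      rw [← hbase i]
    rw [heq]
    calc |g (((shift S)^[i] q.1, ((Fmap S)^[i] q).2)) - Gcm n₀ ((shift S)^[i] q.1)|
        ≤ |g (((shift S)^[i] q.1, ((Fmap S)^[i] q).2))| + |Gcm n₀ ((shift S)^[i] q.1)| :=
          abs_sub _ _
      _ ≤ M + M := add_le_add (hMb _ _ hxI) (hMb _ _ ((hgood n₀).2.2.1 _))
      _ = 2 * M := by ring
  -- eventual bounds from genericity
  have hgG := Metric.tendsto_atTop.mp (hgen (Gcm n₀)) ε hε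
  obtain ⟨N₁, hN₁⟩ := hgG
  have hgH := Metric.tendsto_atTop.mp (hgen (Hcm n₀)) ε hε
  obtain ⟨N₂, hN₂⟩ := hgH
  have hN₃ : ∀ᶠ n : ℕ in atTop, 2 * M * n₀ / (n:ℝ) < ε := by
    have := tendsto_const_div_atTop_nhds_zero_nat (2 * M * n₀)
    have h2 := Metric.tendsto_atTop.mp this ε hε
    obtain ⟨N₃, hN₃⟩ := h2
    rw [eventually_atTop]
    refine ⟨N₃, fun n hn => ?_⟩
    have := hN₃ n hn
    rw [Real.dist_eq, sub_zero] at this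
    exact lt_of_abs_lt this
  rw [eventually_atTop] at hN₃
  obtain ⟨N₃, hN₃'⟩ := hN₃
  refine ⟨max (max N₁ N₂) (max N₃ (max n₀ 1)), fun n hn => ?_⟩
  have hnN₁ : N₁ ≤ n := le_trans (le_trans (le_max_left _ _) (le_max_left _ _)) hn
  have hnN₂ : N₂ ≤ n := le_trans (le_trans (le_max_right _ _) (le_max_left _ _)) hn
  have hnN₃ : N₃ ≤ n := le_trans (le_trans (le_max_left _ _) (le_max_right _ _)) hn
  have hnn₀ : n₀ ≤ n := le_trans (le_trans (le_trans (le_max_left _ _) (le_max_right _ _))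
    (le_max_right _ _)) hn
  have hn1 : 1 ≤ n := le_trans (le_trans (le_trans (le_max_right _ _) (le_max_right _ _))
    (le_max_right _ _)) hn
  have hn0 : (0:ℝ) < n := by exact_mod_cast hn1
  -- averages
  set AvgF := (∑ i ∈ Finset.range n, g ((Fmap S)^[i] q)) / (n:ℝ) with hAvgF
  set AvgG := (∑ i ∈ Finset.range n, Gcm n₀ ((shift S)^[i] q.1)) / (n:ℝ) with hAvgG
  set AvgH := (∑ i ∈ Finset.range n, Hcm n₀ ((shift S)^[i] q.1)) / (n:ℝ) with hAvgH
  have hAvgHle : AvgH < 2 * ε := by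
    have h2 := hN₂ n hnN₂
    rw [Real.dist_eq] at h2
    have h3 := (abs_lt.mp h2).2
    linarith
  have hsum : |∑ i ∈ Finset.range n,
      (g ((Fmap S)^[i] q) - Gcm n₀ ((shift S)^[i] q.1))| ≤
      2*M*(n₀:ℝ) + ((n:ℝ) * ε +
        2*M * (∑ i ∈ Finset.range n, Hcm n₀ ((shift S)^[i] q.1))) := by
    have hsplit := Finset.sum_range_add_sum_Ico
      (fun i => |g ((Fmap S)^[i] q) - Gcm n₀ ((shift S)^[i] q.1)|) hnn₀
    have h1 : |∑ i ∈ Finset.range n,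
        (g ((Fmap S)^[i] q) - Gcm n₀ ((shift S)^[i] q.1))| ≤
        ∑ i ∈ Finset.range n, |g ((Fmap S)^[i] q) - Gcm n₀ ((shift S)^[i] q.1)| :=
      Finset.abs_sum_le_sum_abs _ _
    have h2 : ∑ i ∈ Finset.range n₀,
        |g ((Fmap S)^[i] q) - Gcm n₀ ((shift S)^[i] q.1)| ≤ (n₀:ℝ) * (2*M) := by
      calc ∑ i ∈ Finset.range n₀, |g ((Fmap S)^[i] q) - Gcm n₀ ((shift S)^[i] q.1)|
          ≤ ∑ _i ∈ Finset.range n₀, 2*M := Finset.sum_le_sum fun i _ => htermcrude i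
        _ = (n₀:ℝ) * (2*M) := by simp [mul_comm]
    have h3 : ∑ i ∈ Finset.Ico n₀ n,
        |g ((Fmap S)^[i] q) - Gcm n₀ ((shift S)^[i] q.1)| ≤
        (n:ℝ) * ε + 2*M * (∑ i ∈ Finset.range n, Hcm n₀ ((shift S)^[i] q.1)) := by
      calc ∑ i ∈ Finset.Ico n₀ n, |g ((Fmap S)^[i] q) - Gcm n₀ ((shift S)^[i] q.1)|
          ≤ ∑ i ∈ Finset.Ico n₀ n, (ε + 2 * M * Hcm n₀ ((shift S)^[i] q.1)) :=
            Finset.sum_le_sum fun i hi => hterm i (Finset.mem_Ico.mp hi).1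
        _ = (Finset.Ico n₀ n).card * ε +
            2*M * ∑ i ∈ Finset.Ico n₀ n, Hcm n₀ ((shift S)^[i] q.1) := by
            rw [Finset.sum_add_distrib, Finset.sum_const, Finset.mul_sum]
            simp [nsmul_eq_mul, Finset.mul_sum]
        _ ≤ (n:ℝ) * ε + 2*M * (∑ i ∈ Finset.range n, Hcm n₀ ((shift S)^[i] q.1)) := by
            apply add_le_add
            · apply mul_le_mul_of_nonneg_right _ hε.le
              rw [Nat.card_Ico]
              exact_mod_cast Nat.sub_le n n₀
            · apply mul_le_mul_of_nonneg_left _ (by positivity)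
              apply Finset.sum_le_sum_of_subset_of_nonneg
              · intro i hi
                rw [Finset.mem_range]
                exact (Finset.mem_Ico.mp hi).2
              · exact fun i _ _ => (hχ01 _).1
    calc |∑ i ∈ Finset.range n, (g ((Fmap S)^[i] q) - Gcm n₀ ((shift S)^[i] q.1))|
        ≤ ∑ i ∈ Finset.range n, |g ((Fmap S)^[i] q) - Gcm n₀ ((shift S)^[i] q.1)| := h1
      _ = ∑ i ∈ Finset.range n₀, |g ((Fmap S)^[i] q) - Gcm n₀ ((shift S)^[i] q.1)| +
          ∑ i ∈ Finset.Ico n₀ n, |g ((Fmap S)^[i] q) - Gcm n₀ ((shift S)^[i] q.1)| :=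
          hsplit.symm
      _ ≤ (n₀:ℝ) * (2*M) + ((n:ℝ) * ε +
          2*M * (∑ i ∈ Finset.range n, Hcm n₀ ((shift S)^[i] q.1))) := add_le_add h2 h3
      _ = 2*M*(n₀:ℝ) + ((n:ℝ) * ε +
          2*M * (∑ i ∈ Finset.range n, Hcm n₀ ((shift S)^[i] q.1))) := by ring
  have hT1 : |AvgF - AvgG| ≤ 2*M*(n₀:ℝ)/(n:ℝ) + ε + 2*M*AvgH := by
    rw [hAvgF, hAvgG, div_sub_div_same, ← Finset.sum_sub_distrib, abs_div,
      abs_of_pos hn0, div_le_iff₀ hn0]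
    have hexp : (2*M*(n₀:ℝ)/(n:ℝ) + ε + 2*M*AvgH) * (n:ℝ) =
        2*M*(n₀:ℝ) + ((n:ℝ) * ε +
          2*M * (∑ i ∈ Finset.range n, Hcm n₀ ((shift S)^[i] q.1))) := by
      rw [hAvgH]
      field_simp
      ring
    rw [hexp]
    exact hsum
  have hT2 : |AvgG - ∫ ω, Gcm n₀ ω ∂ν| < ε := by
    have h2 := hN₁ n hnN₁
    rw [Real.dist_eq] at h2
    exact h2
  have hT3 : 2*M*(n₀:ℝ)/(n:ℝ) < ε := hN₃' n hnN₃
  have hHbound : 2*M*AvgH ≤ 2*M*(2*ε) :=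
    mul_le_mul_of_nonneg_left hAvgHle.le (by positivity)
  have hHbound2 : 2*M*(∫ ω, Hcm n₀ ω ∂ν) ≤ 2*M*ε :=
    mul_le_mul_of_nonneg_left hHn₀.le (by positivity)
  have htri : |AvgF - L| ≤ |AvgF - AvgG| + |AvgG - ∫ ω, Gcm n₀ ω ∂ν| +
      |(∫ ω, Gcm n₀ ω ∂ν) - L| := by
    have t1 := abs_sub_le AvgF AvgG L
    have t2 := abs_sub_le AvgG (∫ ω, Gcm n₀ ω ∂ν) L
    linarith
  have hεeq : ε * (6*M + 8) = ε' := by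
    rw [hεdef]
    field_simp
  rw [Real.dist_eq]
  calc |AvgF - L| ≤ |AvgF - AvgG| + |AvgG - ∫ ω, Gcm n₀ ω ∂ν| +
      |(∫ ω, Gcm n₀ ω ∂ν) - L| := htri
    _ < (2*M*(n₀:ℝ)/(n:ℝ) + ε + 2*M*AvgH) + ε + (ε + 2*M*(∫ ω, Hcm n₀ ω ∂ν)) := by
        have := lt_of_le_of_lt (le_refl (0:ℝ)) hε
        apply add_lt_add_of_lt_of_le (add_lt_add_of_le_of_lt hT1 hT2)
        exact hGL
    _ ≤ (ε + ε + 2*M*(2*ε)) + ε + (ε + 2*M*ε) := by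
        apply add_le_add (add_le_add (add_le_add (add_le_add hT3.le le_rfl) hHbound) le_rfl)
        exact add_le_add le_rfl hHbound2
    _ < ε' := by
        rw [← hεeq]
        nlinarith [hε, hM0]

/-- Part 1: invariance of the lifted measure. -/
lemma graph_invariant (S : Sys N) (ν : Measure (Sig S)) [IsProbabilityMeasure ν]
    (hνerg : Ergodic (shift S) ν) {T : Set (Sig S × ℝ)} (hT : IsTrappingStrip S T)
    {φ : Sig S → ℝ} (hφ : Measurable φ)
    (hgraph : ∀ᵐ ω ∂ν, fiber (Amax S T) ω = {φ ω}) :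
    (ν.map fun ω => (ω, φ ω)).map (Fmap S) = ν.map fun ω => (ω, φ ω) := by
  have hFT : Fmap S '' T ⊆ T := hT.2.trans interior_subset
  have hinv := Fmap_image_Amax (S := S) hFT
  have hsh : Measurable (shift S) := (continuous_shift S).measurable
  have hqmp : Measure.QuasiMeasurePreserving (shift S) ν ν :=
    hνerg.toMeasurePreserving.quasiMeasurePreserving
  have hg2 : ∀ᵐ ω ∂ν, fiber (Amax S T) (shift S ω) = {φ (shift S ω)} := hqmp.ae hgraph
  have he : Measurable fun ω : Sig S => (ω, φ ω) := measurable_id.prodMk hφ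
  have heq : (fun ω => Fmap S (ω, φ ω)) =ᵐ[ν] fun ω => (shift S ω, φ (shift S ω)) := by
    filter_upwards [hgraph, hg2] with ω h1 h2
    have hmem : (ω, φ ω) ∈ Amax S T := by
      have hx : φ ω ∈ fiber (Amax S T) ω := by rw [h1]; exact rfl
      exact hx
    have hFmem : Fmap S (ω, φ ω) ∈ Amax S T := hinv ⟨_, hmem, rfl⟩
    have hx2 : S.f (ω.1 0) (φ ω) ∈ fiber (Amax S T) (shift S ω) := hFmem
    rw [h2, mem_singleton_iff] at hx2
    show (shift S ω, S.f (ω.1 0) (φ ω)) = _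
    rw [hx2]
  calc (ν.map fun ω => (ω, φ ω)).map (Fmap S)
      = ν.map ((Fmap S) ∘ fun ω => (ω, φ ω)) := Measure.map_map (measurable_Fmap S) he
    _ = ν.map ((fun ω => (ω, φ ω)) ∘ shift S) := Measure.map_congr heq
    _ = (ν.map (shift S)).map (fun ω => (ω, φ ω)) := (Measure.map_map he hsh).symm
    _ = ν.map fun ω => (ω, φ ω) := by rw [hνerg.toMeasurePreserving.map_eq]

theorem statement17' {N : ℕ} (S : Sys N)
    (ν : Measure (Sig S)) (hν : IsMarkovMeasure S ν) (hνerg : Ergodic (shift S) ν)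
    (T : Set (Sig S × ℝ)) (hT : IsTrappingStrip S T)
    (hCBG : IsCBG S ν (Amax S T)) (φ : Sig S → ℝ) (hφ : Measurable φ)
    (hgraph : ∀ᵐ ω ∂ν, fiber (Amax S T) ω = {φ ω}) :
    (ν.map fun ω => (ω, φ ω)).map (Fmap S) = (ν.map fun ω => (ω, φ ω)) ∧
    (∀ q ∈ T, BirkhoffGeneric S ν q.1 → q ∈ Basin S (ν.map fun ω => (ω, φ ω))) ∧
    stdMeas S ν (T \ Basin S (ν.map fun ω => (ω, φ ω))) = 0 ∧
    0 < stdMeas S ν (Basin S (ν.map fun ω => (ω, φ ω))) := by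
  have hprob : IsProbabilityMeasure ν := hν.1
  have hbasin := basin_of_generic S ν hT hφ hgraph
  have hgen_ae := ae_birkhoffGeneric S ν hνerg
  refine ⟨graph_invariant S ν hνerg hT hφ hgraph, hbasin, ?_⟩
  have hzero : stdMeas S ν (T \ Basin S (ν.map fun ω => (ω, φ ω))) = 0 := by
    have hsub : T \ Basin S (ν.map fun ω => (ω, φ ω)) ⊆
        {ω : Sig S | ¬ BirkhoffGeneric S ν ω} ×ˢ (univ : Set ℝ) := by
      rintro q ⟨hqT, hqB⟩
      refine ⟨?_, mem_univ _⟩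
      intro hgen
      exact hqB (hbasin q hqT hgen)
    have hν0 : ν {ω : Sig S | ¬ BirkhoffGeneric S ν ω} = 0 := ae_iff.mp hgen_ae
    have hb : stdMeas S ν ({ω : Sig S | ¬ BirkhoffGeneric S ν ω} ×ˢ (univ : Set ℝ)) = 0 := by
      rw [stdMeas, Measure.prod_prod, hν0, zero_mul]
    exact le_antisymm (le_trans (measure_mono hsub) (le_of_eq hb)) zero_le
  refine ⟨hzero, ?_⟩
  -- positivity
  obtain ⟨⟨φ₁, φ₂, hc1, hc2, hI1, hI2, hlt, hTeq⟩, htrap⟩ := hT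
  have hTmeas : MeasurableSet T := by
    rw [hTeq]
    have hclosed : IsClosed (Strip S φ₁ φ₂) := by
      have h1 : IsClosed {q : Sig S × ℝ | φ₁ q.1 ≤ q.2} :=
        isClosed_le (hc1.comp continuous_fst) continuous_snd
      have h2 : IsClosed {q : Sig S × ℝ | q.2 ≤ φ₂ q.1} :=
        isClosed_le continuous_snd (hc2.comp continuous_fst)
      exact h1.inter h2
    exact hclosed.measurableSet
  have hTpos : 0 < stdMeas S ν T := by
    rw [stdMeas, Measure.prod_apply hTmeas]
    have hfib : ∀ ω : Sig S, (Prod.mk ω ⁻¹' T) = Icc (φ₁ ω) (φ₂ ω) := by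
      intro ω
      rw [hTeq]
      ext x
      simp [Strip, mem_Icc]
    have hval : ∀ ω : Sig S, (volume.restrict (Icc (0:ℝ) 1)) (Prod.mk ω ⁻¹' T) =
        ENNReal.ofReal (φ₂ ω - φ₁ ω) := by
      intro ω
      rw [hfib ω, Measure.restrict_apply measurableSet_Icc,
        inter_eq_self_of_subset_left (Icc_subset_Icc (hI1 ω).1 (hI2 ω).2),
        Real.volume_Icc]
    rw [lintegral_congr hval]
    rw [pos_iff_ne_zero]
    intro hcontra
    have hmeas : Measurable fun ω : Sig S => ENNReal.ofReal (φ₂ ω - φ₁ ω) :=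
      (ENNReal.measurable_ofReal).comp (hc2.sub hc1).measurable
    rw [lintegral_eq_zero_iff hmeas] at hcontra
    have : ∃ ω : Sig S, ENNReal.ofReal (φ₂ ω - φ₁ ω) = 0 := by
      have hne : (ae ν).NeBot := ae_neBot.mpr (IsProbabilityMeasure.ne_zero ν)
      exact hcontra.exists
    obtain ⟨ω, hω⟩ := this
    rw [ENNReal.ofReal_eq_zero] at hω
    linarith [hlt ω]
  have hchain : stdMeas S ν T ≤ stdMeas S ν (Basin S (ν.map fun ω => (ω, φ ω))) := by
    calc stdMeas S ν T ≤ stdMeas S ν (T ∩ Basin S (ν.map fun ω => (ω, φ ω))) +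
        stdMeas S ν (T \ Basin S (ν.map fun ω => (ω, φ ω))) :=
          measure_le_inter_add_diff _ _ _
      _ = stdMeas S ν (T ∩ Basin S (ν.map fun ω => (ω, φ ω))) := by rw [hzero, add_zero]
      _ ≤ stdMeas S ν (Basin S (ν.map fun ω => (ω, φ ω))) :=
          measure_mono inter_subset_right
  exact lt_of_lt_of_le hTpos hchain


/-- the lift `m_φ` of `ν` to the graph part of the CBG attractor of a trapping
strip is an invariant SRB measure; its basin contains every point of the strip with
Birkhoff-generic base coordinate, hence a full standard measure subset of the strip. -/
theorem statement17 {N : ℕ} (S : Sys N)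
    (ν : Measure (Sig S)) (hν : IsMarkovMeasure S ν) (hνerg : Ergodic (shift S) ν)
    (T : Set (Sig S × ℝ)) (hT : IsTrappingStrip S T)
    (hCBG : IsCBG S ν (Amax S T)) (φ : Sig S → ℝ) (hφ : Measurable φ)
    (hgraph : ∀ᵐ ω ∂ν, fiber (Amax S T) ω = {φ ω}) :
    (ν.map fun ω => (ω, φ ω)).map (Fmap S) = (ν.map fun ω => (ω, φ ω)) ∧
    (∀ q ∈ T, BirkhoffGeneric S ν q.1 → q ∈ Basin S (ν.map fun ω => (ω, φ ω))) ∧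
    stdMeas S ν (T \ Basin S (ν.map fun ω => (ω, φ ω))) = 0 ∧
    0 < stdMeas S ν (Basin S (ν.map fun ω => (ω, φ ω))) :=
  statement17' S ν hν hνerg T hT hCBG φ hφ hgraph

end PaperSSP
end
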